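/- arXiv:1510.02383 — 8 statements merged into one kernel-verified Lean document; each statement's English description precedes it below -/
import Mathlib

section
/- Let ω : G → X and τ : Ĝ → Y be weights on a finite abelian group G and its character group, with (ω, τ) a compatible pair, and let n ≥ 1 be an integer. Then the pair of product weights (ω^n, τ^n) on G^n and Ĝ^n is compatible, and for all a = (a₁,…,a_n) ∈ X^n and b = (b₁,…,b_n) ∈ Y^n the Krawtchouk coefficients satisfy K(ω^n, τ^n)(a, b) = Π_{j=1}^n K(ω, τ)(a_j, b_j). -/
open scoped Classical

variable {G X Y : Type*}

private lemma key_factor [AddCommGroup G] [Fintype G] [Fintype (AddChar G ℂˣ)]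
    (τ : AddChar G ℂˣ → Y) (n : ℕ) (g : Fin n → G) (b : Fin n → Y) :
    ∑ χ : Fin n → AddChar G ℂˣ,
        (if (fun j => τ (χ j)) = b then (((∏ j, χ j (g j) : ℂˣ)) : ℂ) else 0)
      = ∏ j, ∑ χ : AddChar G ℂˣ, (if τ χ = b j then ((χ (g j) : ℂˣ) : ℂ) else 0) := by
  rw [Finset.prod_univ_sum, Fintype.piFinset_univ]
  apply Finset.sum_congr rfl
  intro χ _
  by_cases h : ∀ j, τ (χ j) = b j
  · rw [if_pos (funext h)]
    push_cast
    exact Finset.prod_congr rfl fun j _ => (if_pos (h j)).symm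
  · rw [if_neg (fun he => h fun j => congrFun he j)]
    push_neg at h
    obtain ⟨j, hj⟩ := h
    exact (Finset.prod_eq_zero (Finset.mem_univ j) (if_neg hj : _ = (0:ℂ))).symm

/-- The pair of weights `(ω, τ)` on a finite abelian group `G` and its character
group `Ĝ = AddChar G ℂˣ` is *compatible*. -/
def Compatible [AddCommGroup G] [Fintype G] [Fintype (AddChar G ℂˣ)]
    (ω : G → X) (τ : AddChar G ℂˣ → Y) : Prop :=
  ∀ g₁ g₂ : G, ω g₁ = ω g₂ → ∀ b : Y,
    ∑ χ : AddChar G ℂˣ, (if τ χ = b then ((χ g₁ : ℂˣ) : ℂ) else 0)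
      = ∑ χ : AddChar G ℂˣ, (if τ χ = b then ((χ g₂ : ℂˣ) : ℂ) else 0)

/-- The Krawtchouk coefficient `K(ω,τ)(a,b)`. -/
noncomputable def kraw [AddCommGroup G] [Fintype G] [Fintype (AddChar G ℂˣ)]
    (ω : G → X) (τ : AddChar G ℂˣ → Y) (a : X) (b : Y) : ℂ :=
  if h : ∃ g : G, ω g = a then
    ∑ χ : AddChar G ℂˣ, (if τ χ = b then ((χ h.choose : ℂˣ) : ℂ) else 0)
  else 0

/-- Compatibility of the pair of product weights `(ω^n, τ^n)` on `G^n` and on its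
character group `Ĝ^n` (identified with `Fin n → AddChar G ℂˣ` acting by
`χ(g) = Π_j χ_j (g_j)`). -/
def CompatibleProd [AddCommGroup G] [Fintype G] [Fintype (AddChar G ℂˣ)]
    (n : ℕ) (ω : G → X) (τ : AddChar G ℂˣ → Y) : Prop :=
  ∀ g₁ g₂ : Fin n → G, (fun j => ω (g₁ j)) = (fun j => ω (g₂ j)) → ∀ b : Fin n → Y,
    ∑ χ : Fin n → AddChar G ℂˣ,
        (if (fun j => τ (χ j)) = b then (((∏ j, χ j (g₁ j) : ℂˣ)) : ℂ) else 0)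
      = ∑ χ : Fin n → AddChar G ℂˣ,
          (if (fun j => τ (χ j)) = b then (((∏ j, χ j (g₂ j) : ℂˣ)) : ℂ) else 0)

/-- The Krawtchouk coefficient `K(ω^n,τ^n)(a,b)` of the pair of product weights. -/
noncomputable def krawProd [AddCommGroup G] [Fintype G] [Fintype (AddChar G ℂˣ)]
    (n : ℕ) (ω : G → X) (τ : AddChar G ℂˣ → Y) (a : Fin n → X) (b : Fin n → Y) : ℂ :=
  if h : ∃ g : Fin n → G, (fun j => ω (g j)) = a then
    ∑ χ : Fin n → AddChar G ℂˣ,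
      (if (fun j => τ (χ j)) = b then (((∏ j, χ j (h.choose j) : ℂˣ)) : ℂ) else 0)
  else 0

/-- If `(ω, τ)` is compatible then the pair of product weights `(ω^n, τ^n)` is
compatible and `K(ω^n,τ^n)(a,b) = Π_{j} K(ω,τ)(a_j, b_j)`. -/
theorem stmt_1 [AddCommGroup G] [Fintype G] [Fintype (AddChar G ℂˣ)]
    (ω : G → X) (τ : AddChar G ℂˣ → Y) (hcomp : Compatible ω τ)
    (n : ℕ) (hn : 1 ≤ n) :
    CompatibleProd n ω τ ∧
      ∀ (a : Fin n → X) (b : Fin n → Y),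
        krawProd n ω τ a b = ∏ j, kraw ω τ (a j) (b j) := by
  constructor
  · intro g₁ g₂ hg b
    rw [key_factor, key_factor]
    exact Finset.prod_congr rfl fun j _ => hcomp _ _ (congrFun hg j) (b j)
  · intro a b
    unfold krawProd
    split_ifs with h
    · rw [key_factor]
      apply Finset.prod_congr rfl
      intro j _
      have hj : ∃ g : G, ω g = a j := ⟨h.choose j, congrFun h.choose_spec j⟩
      rw [kraw, dif_pos hj]
      exact hcomp _ _ ((congrFun h.choose_spec j).trans hj.choose_spec.symm) (b j)
    · have : ∃ j, ¬ ∃ g : G, ω g = a j := by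
        by_contra hc
        push_neg at hc
        exact h ⟨fun j => (hc j).choose, funext fun j => (hc j).choose_spec⟩
      obtain ⟨j, hj⟩ := this
      rw [eq_comm]
      apply Finset.prod_eq_zero (Finset.mem_univ j)
      rw [kraw, dif_neg hj]
end

section
/- Let σ : G ⇢ L be a regular support. Then for every S ∈ L one has G_σ(S)* = Ĝ_{σ*}(S), i.e. a character χ ∈ Ĝ satisfies χ(g) = 1 for all g ∈ G_σ(S) if and only if S ≤ σ*(χ) in L. -/
open Finset
open scoped Classical Pointwise

/-- A finite graded lattice of rank `r` (with rank function `ρ`) that is *regular*: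
the counting numbers `μ_≤`, `μ_≥` and the Möbius numbers `μ_L` depend only on ranks. -/
structure RegularLattice (L : Type*) [Lattice L] [BoundedOrder L] [Fintype L] where
  /-- the rank of the lattice -/
  r : ℕ
  /-- the rank function -/
  ρ : L → ℕ
  ρ_bot : ρ ⊥ = 0
  ρ_top : ρ ⊤ = r
  ρ_covby : ∀ S T : L, S ⋖ T → ρ T = ρ S + 1
  /-- the Möbius function of the lattice -/
  mu : L → L → ℤ
  mu_self : ∀ S : L, mu S S = 1
  mu_sum : ∀ S T : L, S < T → mu S T = - ∑ U : L, (if S ≤ U ∧ U < T then mu S U else 0)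
  /-- `μ_≤ s t` : the number of elements of rank `s` below an element of rank `t` -/
  muLE : ℕ → ℕ → ℕ
  card_le : ∀ (s : ℕ) (T : L), Nat.card {S : L // ρ S = s ∧ S ≤ T} = muLE s (ρ T)
  /-- `μ_≥ s t` : the number of elements of rank `s` above an element of rank `t` -/
  muGE : ℕ → ℕ → ℕ
  card_ge : ∀ (s : ℕ) (T : L), Nat.card {S : L // ρ S = s ∧ T ≤ S} = muGE s (ρ T)
  /-- `μ_L s t` : the common value of the Möbius function on pairs of ranks `s ≤ t`,
  with the convention `μ_L s t = 0` for `s > t` -/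
  muN : ℕ → ℕ → ℤ
  mu_eq : ∀ S T : L, S ≤ T → mu S T = muN (ρ S) (ρ T)
  muN_zero : ∀ s t : ℕ, t < s → muN s t = 0

/-- A regular support `σ : G ⇢ L` on a finite abelian group `G` with values in a
regular lattice `L`, together with its cardinality invariant `γ`. -/
structure RegularSupport (L : Type*) [Lattice L] [BoundedOrder L] [Fintype L]
    (G : Type*) [AddCommGroup G] [Fintype G] (RL : RegularLattice L) where
  /-- the support function -/
  σ : G → L
  supp_zero : ∀ g : G, σ g = ⊥ ↔ g = 0
  supp_neg : ∀ g : G, σ (-g) = σ g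
  supp_add : ∀ g₁ g₂ : G, σ (g₁ + g₂) ≤ σ g₁ ⊔ σ g₂
  supp_sup : ∀ S₁ S₂ : L,
    {g : G | σ g ≤ S₁ ⊔ S₂} = {g : G | σ g ≤ S₁} + {g : G | σ g ≤ S₂}
  /-- `γ s` : the common cardinality of `G_σ(S)` over elements `S` of rank `s` -/
  γ : ℕ → ℕ
  card_supp : ∀ S : L, Nat.card {g : G // σ g ≤ S} = γ (RL.ρ S)

/-- The dual support `σ* : Ĝ → L`, `σ*(χ) = ⋁ {S ∈ L : χ ∈ G_σ(S)*}`. -/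
noncomputable def RegularSupport.dualSupp {L : Type*} [Lattice L] [BoundedOrder L] [Fintype L]
    {G : Type*} [AddCommGroup G] [Fintype G] {RL : RegularLattice L}
    (RS : RegularSupport L G RL) (χ : AddChar G ℂˣ) : L :=
  (Finset.univ.filter (fun S : L => ∀ g : G, RS.σ g ≤ S → χ g = 1)).sup id

/-- For every `S ∈ L`, `G_σ(S)* = Ĝ_{σ*}(S)`: a character `χ` satisfies `χ(g) = 1`
for all `g ∈ G_σ(S)` if and only if `S ≤ σ*(χ)` in `L`. -/
theorem stmt_3 {L : Type*} [Lattice L] [BoundedOrder L] [Fintype L]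
    {G : Type*} [AddCommGroup G] [Fintype G] {RL : RegularLattice L}
    (RS : RegularSupport L G RL) (S : L) (χ : AddChar G ℂˣ) :
    (∀ g : G, RS.σ g ≤ S → χ g = 1) ↔ S ≤ RS.dualSupp χ := by
  set p : L → Prop := fun T => ∀ g : G, RS.σ g ≤ T → χ g = 1 with hp
  have hsup : ∀ T₁ T₂ : L, p T₁ → p T₂ → p (T₁ ⊔ T₂) := by
    intro T₁ T₂ h₁ h₂ g hg
    have hmem : g ∈ {g : G | RS.σ g ≤ T₁} + {g : G | RS.σ g ≤ T₂} := by
      rw [← RS.supp_sup]; exact hg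
    obtain ⟨a, ha, b, hb, hab⟩ := hmem
    rw [← hab, AddChar.map_add_eq_mul, h₁ a ha, h₂ b hb, one_mul]
  have hbot : p ⊥ := by
    intro g hg
    have : g = 0 := (RS.supp_zero g).mp (le_bot_iff.mp hg)
    rw [this, AddChar.map_zero_eq_one]
  constructor
  · intro h
    have hmem : S ∈ Finset.univ.filter (fun T : L => ∀ g : G, RS.σ g ≤ T → χ g = 1) := by
      simp only [Finset.mem_filter, Finset.mem_univ, true_and]
      exact h
    exact Finset.le_sup (f := id) hmem
  · intro hS g hg
    have hgood : p (RS.dualSupp χ) := by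
      apply Finset.sup_induction hbot (fun a ha b hb => hsup a b ha hb)
      intro T hT
      simp only [Finset.mem_filter, Finset.mem_univ, true_and] at hT
      exact hT
    exact hgood g (hg.trans hS)
end

section
/- Let σ : G ⇢ L be a regular support on a finite abelian group G with values in a regular lattice L of rank r. Then the dual support σ* : Ĝ → L is a regular support on the character group (Ĝ, ·) with values in the dual lattice L*; explicitly: (A) σ*(χ) = 1_L if and only if χ is the trivial character; (B) σ*(χ⁻¹) = σ*(χ) for all χ; (C) σ*(χ₁) ∧ σ*(χ₂) ≤ σ*(χ₁·χ₂) in L for all χ₁, χ₂ ∈ Ĝ; (D) Ĝ_{σ*}(S₁ ∧ S₂) = Ĝ_{σ*}(S₁) · Ĝ_{σ*}(S₂) for all S₁, S₂ ∈ L; (E) |Ĝ_{σ*}(S)| depends only on ρ(S). -/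
open Finset
open scoped Classical Pointwise

@[to_additive my_add_version]
private lemma my_card_sup_mul_card_inf {Γ : Type*} [CommGroup Γ] (P Q : Subgroup Γ) :
    Nat.card ↥(P ⊔ Q) * Nat.card ↥(P ⊓ Q) = Nat.card P * Nat.card Q := by
  have h1 := Subgroup.card_eq_card_quotient_mul_card_subgroup (Q.subgroupOf P)
  have h2 := Subgroup.card_eq_card_quotient_mul_card_subgroup (Q.subgroupOf (P ⊔ Q))
  have hc : Nat.card (↥P ⧸ Q.subgroupOf P)
      = Nat.card (↥(P ⊔ Q) ⧸ Q.subgroupOf (P ⊔ Q)) :=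
    Nat.card_congr (QuotientGroup.quotientInfEquivProdNormalQuotient P Q).toEquiv
  have hQ : Nat.card (Q.subgroupOf (P ⊔ Q)) = Nat.card Q :=
    Nat.card_congr (Subgroup.subgroupOfEquivOfLe le_sup_right).toEquiv
  have hPQ : Nat.card (Q.subgroupOf P) = Nat.card ↥(P ⊓ Q) := by
    have h : Q.subgroupOf P = (P ⊓ Q).subgroupOf P := by
      ext x; simp [Subgroup.mem_subgroupOf]
    rw [h]
    exact Nat.card_congr (Subgroup.subgroupOfEquivOfLe inf_le_left).toEquiv
  rw [h2, hQ, ← hc, h1, hPQ]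
  ring

private lemma my_finite_addChar (Q : Type*) [AddCommGroup Q] [Finite Q] :
    Finite (AddChar Q ℂˣ) := by
  haveI : NeZero ((Monoid.exponent (Multiplicative Q) : ℕ) : ℂ) :=
    ⟨by exact_mod_cast Monoid.exponent_ne_zero_of_finite⟩
  obtain ⟨e⟩ := CommGroup.monoidHom_mulEquiv_of_hasEnoughRootsOfUnity (Multiplicative Q) ℂ
  exact Finite.of_equiv _ (AddChar.toMonoidHomEquiv.trans e.toEquiv).symm

private lemma my_card_addChar (Q : Type*) [AddCommGroup Q] [Finite Q] :
    Nat.card (AddChar Q ℂˣ) = Nat.card Q := by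
  haveI : NeZero ((Monoid.exponent (Multiplicative Q) : ℕ) : ℂ) :=
    ⟨by exact_mod_cast Monoid.exponent_ne_zero_of_finite⟩
  obtain ⟨e⟩ := CommGroup.monoidHom_mulEquiv_of_hasEnoughRootsOfUnity (Multiplicative Q) ℂ
  exact Nat.card_congr (AddChar.toMonoidHomEquiv.trans e.toEquiv)

/-- The annihilator of a subset of `G` inside the character group. -/
private def myAnn {G : Type*} [AddCommGroup G] (s : Set G) : Subgroup (AddChar G ℂˣ) where
  carrier := {χ | ∀ g ∈ s, χ g = 1}
  one_mem' := fun g _ => rfl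
  mul_mem' := fun {a b} ha hb g hg => by
    rw [AddChar.mul_apply, ha g hg, hb g hg, one_mul]
  inv_mem' := fun {a} ha g hg => by
    rw [AddChar.inv_apply', ha g hg, inv_one]

private lemma my_card_ann {G : Type*} [AddCommGroup G] [Finite G] (H : AddSubgroup G) :
    Nat.card (myAnn (H : Set G)) * Nat.card H = Nat.card G := by
  have key : Nat.card (myAnn (H : Set G)) = Nat.card (AddChar (G ⧸ H) ℂˣ) := by
    refine (Nat.card_congr (Equiv.ofBijective
      (fun ψ : AddChar (G ⧸ H) ℂˣ =>
        (⟨ψ.compAddMonoidHom (QuotientAddGroup.mk' H), fun g hg => by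
          simp only [AddChar.compAddMonoidHom_apply]
          rw [show (QuotientAddGroup.mk' H) g = 0 from (QuotientAddGroup.eq_zero_iff g).mpr hg,
            AddChar.map_zero_eq_one]⟩ :
          myAnn (H : Set G)))
      ⟨?_, ?_⟩)).symm
    · intro ψ₁ ψ₂ h
      have h' := congrArg (fun x : myAnn (H : Set G) => (x : AddChar G ℂˣ)) h
      refine DFunLike.ext _ _ fun x => ?_
      induction x using QuotientAddGroup.induction_on with
      | H g => simpa using DFunLike.congr_fun h' g
    · rintro ⟨χ, hχ⟩
      have h0 : ∀ g ∈ H, AddChar.toAddMonoidHomEquiv χ g = 0 := fun g hg => by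
        simpa using hχ g hg
      refine ⟨AddChar.toAddMonoidHomEquiv.symm
        (QuotientAddGroup.lift H (AddChar.toAddMonoidHomEquiv χ) h0), ?_⟩
      ext g
      simp [AddChar.compAddMonoidHom_apply, AddChar.toAddMonoidHomEquiv_apply]
      rfl
  rw [key, my_card_addChar]
  exact (AddSubgroup.card_eq_card_quotient_mul_card_addSubgroup H).symm

section DualAux

variable {L : Type*} [Lattice L] [BoundedOrder L] [Fintype L]
    {G : Type*} [AddCommGroup G] [Fintype G] {RL : RegularLattice L}

/-- `G_σ(S)` as an additive subgroup. -/
private def RegularSupport.Hsub (RS : RegularSupport L G RL) (S : L) : AddSubgroup G where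
  carrier := {g | RS.σ g ≤ S}
  zero_mem' := by
    show RS.σ 0 ≤ S
    rw [(RS.supp_zero 0).mpr rfl]
    exact bot_le
  add_mem' := fun {a b} ha hb => le_trans (RS.supp_add a b) (sup_le ha hb)
  neg_mem' := fun {a} ha => by
    show RS.σ (-a) ≤ S
    rw [RS.supp_neg a]
    exact ha

private lemma RegularSupport.dualSupp_spec (RS : RegularSupport L G RL)
    (χ : AddChar G ℂˣ) :
    ∀ g : G, RS.σ g ≤ RS.dualSupp χ → χ g = 1 := by
    have hP : ∀ g : G,
        RS.σ g ≤ (Finset.univ.filter (fun S : L => ∀ g : G, RS.σ g ≤ S → χ g = 1)).sup id →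
          χ g = 1 := by
      refine Finset.sup_induction (p := fun T : L => ∀ g : G, RS.σ g ≤ T → χ g = 1) ?_ ?_ ?_
      · intro g hg
        have hg0 : g = 0 := (RS.supp_zero g).mp (le_bot_iff.mp hg)
        rw [hg0, AddChar.map_zero_eq_one]
      · intro S₁ h₁ S₂ h₂ g hg
        have hmem : g ∈ {g : G | RS.σ g ≤ S₁} + {g : G | RS.σ g ≤ S₂} := by
          rw [← RS.supp_sup S₁ S₂]; exact hg
        obtain ⟨a, ha, b, hb, rfl⟩ := hmem
        rw [AddChar.map_add_eq_mul, h₁ a ha, h₂ b hb, one_mul]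
      · intro T hT
        exact (Finset.mem_filter.mp hT).2
    exact hP

private lemma RegularSupport.le_dualSupp_iff (RS : RegularSupport L G RL)
    (χ : AddChar G ℂˣ) (S : L) :
    S ≤ RS.dualSupp χ ↔ ∀ g : G, RS.σ g ≤ S → χ g = 1 := by
  constructor
  · intro hS
    exact fun g hg => RS.dualSupp_spec χ g (hg.trans hS)
  · intro h
    exact Finset.le_sup (f := id) (Finset.mem_filter.mpr ⟨Finset.mem_univ S, h⟩)

private lemma RegularSupport.le_dualSupp_iff_mem (RS : RegularSupport L G RL)
    (χ : AddChar G ℂˣ) (S : L) :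
    S ≤ RS.dualSupp χ ↔ χ ∈ myAnn (RS.Hsub S : Set G) := RS.le_dualSupp_iff χ S

private lemma RegularSupport.Hsub_sup (RS : RegularSupport L G RL) (S₁ S₂ : L) :
    RS.Hsub S₁ ⊔ RS.Hsub S₂ = RS.Hsub (S₁ ⊔ S₂) := by
  refine SetLike.coe_injective ?_
  rw [AddSubgroup.add_normal]
  exact (RS.supp_sup S₁ S₂).symm

private lemma RegularSupport.Hsub_inf (RS : RegularSupport L G RL) (S₁ S₂ : L) :
    RS.Hsub S₁ ⊓ RS.Hsub S₂ = RS.Hsub (S₁ ⊓ S₂) := by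
  ext g
  rw [AddSubgroup.mem_inf]
  exact (le_inf_iff).symm

private lemma RegularSupport.ann_inf (RS : RegularSupport L G RL) (S₁ S₂ : L) :
    myAnn (RS.Hsub S₁ : Set G) ⊓ myAnn (RS.Hsub S₂ : Set G)
      = myAnn (RS.Hsub (S₁ ⊔ S₂) : Set G) := by
  ext χ
  constructor
  · rintro ⟨h₁, h₂⟩ g hg
    have hmem : g ∈ {g : G | RS.σ g ≤ S₁} + {g : G | RS.σ g ≤ S₂} := by
      rw [← RS.supp_sup S₁ S₂]; exact hg
    obtain ⟨a, ha, b, hb, rfl⟩ := hmem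
    rw [AddChar.map_add_eq_mul, h₁ a ha, h₂ b hb, one_mul]
  · intro h
    exact ⟨fun g hg => h g (le_trans hg le_sup_left),
      fun g hg => h g (le_trans hg le_sup_right)⟩

private lemma RegularSupport.card_Hsub (RS : RegularSupport L G RL) (S : L) :
    Nat.card (RS.Hsub S) = RS.γ (RL.ρ S) := by
  rw [← RS.card_supp S]
  exact Nat.card_congr (Equiv.subtypeEquivRight fun g => Iff.rfl)

private lemma RegularSupport.card_ann_mul (RS : RegularSupport L G RL) (S : L) :
    Nat.card (myAnn (RS.Hsub S : Set G)) * RS.γ (RL.ρ S) = Nat.card G := by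
  rw [← RS.card_Hsub S]
  exact my_card_ann (RS.Hsub S)

private lemma RegularSupport.ann_sup (RS : RegularSupport L G RL) (S₁ S₂ : L) :
    myAnn (RS.Hsub S₁ : Set G) ⊔ myAnn (RS.Hsub S₂ : Set G)
      = myAnn (RS.Hsub (S₁ ⊓ S₂) : Set G) := by
  haveI : Finite (AddChar G ℂˣ) := my_finite_addChar G
  have hle : myAnn (RS.Hsub S₁ : Set G) ⊔ myAnn (RS.Hsub S₂ : Set G)
      ≤ myAnn (RS.Hsub (S₁ ⊓ S₂) : Set G) := by
    refine sup_le ?_ ?_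
    · exact fun χ hχ g hg => hχ g (le_trans hg inf_le_left)
    · exact fun χ hχ g hg => hχ g (le_trans hg inf_le_right)
  refine Subgroup.eq_of_le_of_card_ge hle (le_of_eq ?_)
  have hprod := my_card_sup_mul_card_inf (myAnn (RS.Hsub S₁ : Set G))
    (myAnn (RS.Hsub S₂ : Set G))
  rw [RS.ann_inf S₁ S₂] at hprod
  have hH := my_add_version (RS.Hsub S₁) (RS.Hsub S₂)
  rw [RS.Hsub_sup S₁ S₂, RS.Hsub_inf S₁ S₂, RS.card_Hsub, RS.card_Hsub, RS.card_Hsub,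
    RS.card_Hsub] at hH
  have c1 := RS.card_ann_mul S₁
  have c2 := RS.card_ann_mul S₂
  have cSup := RS.card_ann_mul (S₁ ⊔ S₂)
  have cInf := RS.card_ann_mul (S₁ ⊓ S₂)
  have hγpos : ∀ S : L, 0 < RS.γ (RL.ρ S) := fun S => by
    rw [← RS.card_Hsub S]; exact Nat.card_pos
  have hnpos : 0 < Nat.card G := Nat.card_pos
  set n := Nat.card G
  set a1 := Nat.card (myAnn (RS.Hsub S₁ : Set G))
  set a2 := Nat.card (myAnn (RS.Hsub S₂ : Set G))
  set aS := Nat.card (myAnn (RS.Hsub (S₁ ⊔ S₂) : Set G))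
  set aI := Nat.card (myAnn (RS.Hsub (S₁ ⊓ S₂) : Set G))
  set x := Nat.card ↥(myAnn (RS.Hsub S₁ : Set G) ⊔ myAnn (RS.Hsub S₂ : Set G))
  set h1 := RS.γ (RL.ρ S₁)
  set h2 := RS.γ (RL.ρ S₂)
  set hS := RS.γ (RL.ρ (S₁ ⊔ S₂))
  set hI := RS.γ (RL.ρ (S₁ ⊓ S₂))
  have F1 : x * (n * hI) = n * n := by
    calc x * (n * hI) = x * ((aS * hS) * hI) := by rw [cSup]
      _ = (x * aS) * (hS * hI) := by ring
      _ = (a1 * a2) * (h1 * h2) := by rw [hprod, hH]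
      _ = (a1 * h1) * (a2 * h2) := by ring
      _ = n * n := by rw [c1, c2]
  have F2 : aI * (n * hI) = n * n := by
    calc aI * (n * hI) = (aI * hI) * n := by ring
      _ = n * n := by rw [cInf]
  exact Nat.eq_of_mul_eq_mul_right (Nat.mul_pos hnpos (hγpos _)) (F2.trans F1.symm)

end DualAux
/-- The dual support `σ* : Ĝ → L*` is a regular support on the character group with
values in the dual lattice `L*` (order reversed: `⊥_{L*} = ⊤_L`, joins become meets):
(A) `σ*(χ) = 1_L = ⊤` iff `χ` is trivial; (B) `σ*(χ⁻¹) = σ*(χ)`;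
(C) `σ*(χ₁) ⊓ σ*(χ₂) ≤ σ*(χ₁·χ₂)` in `L`;
(D) `Ĝ_{σ*}(S₁ ⊓ S₂) = Ĝ_{σ*}(S₁) · Ĝ_{σ*}(S₂)`;
(E) `|Ĝ_{σ*}(S)|` only depends on `ρ(S)`. -/
theorem stmt_4 {L : Type*} [Lattice L] [BoundedOrder L] [Fintype L]
    {G : Type*} [AddCommGroup G] [Fintype G] {RL : RegularLattice L}
    (RS : RegularSupport L G RL) :
    (∀ χ : AddChar G ℂˣ, RS.dualSupp χ = ⊤ ↔ χ = 1) ∧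
    (∀ χ : AddChar G ℂˣ, RS.dualSupp χ⁻¹ = RS.dualSupp χ) ∧
    (∀ χ₁ χ₂ : AddChar G ℂˣ,
      RS.dualSupp χ₁ ⊓ RS.dualSupp χ₂ ≤ RS.dualSupp (χ₁ * χ₂)) ∧
    (∀ S₁ S₂ : L,
      {χ : AddChar G ℂˣ | S₁ ⊓ S₂ ≤ RS.dualSupp χ}
        = {χ : AddChar G ℂˣ | S₁ ≤ RS.dualSupp χ}
            * {χ : AddChar G ℂˣ | S₂ ≤ RS.dualSupp χ}) ∧
    (∀ S T : L, RL.ρ S = RL.ρ T →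
      Nat.card {χ : AddChar G ℂˣ // S ≤ RS.dualSupp χ}
        = Nat.card {χ : AddChar G ℂˣ // T ≤ RS.dualSupp χ}) := by
  haveI : Finite (AddChar G ℂˣ) := my_finite_addChar G
  refine ⟨?_, ?_, ?_, ?_, ?_⟩
  · -- (A)
    intro χ
    constructor
    · intro h
      have h' := (RS.le_dualSupp_iff χ ⊤).mp (h ▸ le_rfl)
      refine DFunLike.ext _ _ fun g => ?_
      simpa using h' g le_top
    · rintro rfl
      refine le_antisymm le_top ?_
      exact (RS.le_dualSupp_iff 1 ⊤).mpr fun g _ => rfl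
  · -- (B)
    have key : ∀ χ : AddChar G ℂˣ, RS.dualSupp χ ≤ RS.dualSupp χ⁻¹ := fun χ => by
      refine (RS.le_dualSupp_iff χ⁻¹ _).mpr fun g hg => ?_
      rw [AddChar.inv_apply', RS.dualSupp_spec χ g hg, inv_one]
    intro χ
    refine le_antisymm ?_ (key χ)
    exact (key χ⁻¹).trans (le_of_eq (congrArg RS.dualSupp (inv_inv χ)))
  · -- (C)
    intro χ₁ χ₂
    refine (RS.le_dualSupp_iff _ _).mpr fun g hg => ?_
    rw [AddChar.mul_apply, RS.dualSupp_spec χ₁ g (hg.trans inf_le_left),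
      RS.dualSupp_spec χ₂ g (hg.trans inf_le_right), one_mul]
  · -- (D)
    intro S₁ S₂
    have h1 : {χ : AddChar G ℂˣ | S₁ ⊓ S₂ ≤ RS.dualSupp χ}
        = (myAnn (RS.Hsub (S₁ ⊓ S₂) : Set G) : Set (AddChar G ℂˣ)) := by
      ext χ; exact RS.le_dualSupp_iff_mem χ _
    have h2 : {χ : AddChar G ℂˣ | S₁ ≤ RS.dualSupp χ}
        = (myAnn (RS.Hsub S₁ : Set G) : Set (AddChar G ℂˣ)) := by
      ext χ; exact RS.le_dualSupp_iff_mem χ _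
    have h3 : {χ : AddChar G ℂˣ | S₂ ≤ RS.dualSupp χ}
        = (myAnn (RS.Hsub S₂ : Set G) : Set (AddChar G ℂˣ)) := by
      ext χ; exact RS.le_dualSupp_iff_mem χ _
    rw [h1, h2, h3, ← RS.ann_sup S₁ S₂,
      @Subgroup.mul_normal _ _ _ _ (@Subgroup.normal_of_isMulCommutative _ _ ⟨⟨fun a b : AddChar G ℂˣ => mul_comm a b⟩⟩ _)]
  · -- (E)
    intro S T h
    have cS : Nat.card {χ : AddChar G ℂˣ // S ≤ RS.dualSupp χ}
        = Nat.card (myAnn (RS.Hsub S : Set G)) :=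
      Nat.card_congr (Equiv.subtypeEquivRight fun χ => RS.le_dualSupp_iff_mem χ S)
    have cT : Nat.card {χ : AddChar G ℂˣ // T ≤ RS.dualSupp χ}
        = Nat.card (myAnn (RS.Hsub T : Set G)) :=
      Nat.card_congr (Equiv.subtypeEquivRight fun χ => RS.le_dualSupp_iff_mem χ T)
    have e1 := RS.card_ann_mul S
    have e2 := RS.card_ann_mul T
    rw [h] at e1
    have hpos : 0 < RS.γ (RL.ρ T) := by
      rw [← RS.card_Hsub T]; exact Nat.card_pos
    rw [cS, cT]
    exact Nat.eq_of_mul_eq_mul_right hpos (e1.trans e2.symm)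
end

section
/- Let σ : G ⇢ L be a regular support on a finite abelian group G with values in a regular lattice L of rank r, and let σ* : Ĝ ⇢ L* be its dual support. Then for all 0 ≤ s ≤ r one has γ_{σ*}(s) = |G| / γ_σ(r − s), where γ_{σ*}(s) = |Ĝ_{σ*}(S)| for any S ∈ L with ρ_{L*}(S) = s. -/
open Finset
open scoped Classical Pointwise

lemma cardAddChar (A : Type*) [AddCommGroup A] [Finite A] :
    Nat.card (AddChar A ℂˣ) = Nat.card A := by
  haveI : NeZero ((Monoid.exponent (Multiplicative A) : ℕ) : ℂ) :=
    ⟨Nat.cast_ne_zero.mpr (Monoid.exponent_ne_zero_of_finite)⟩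
  obtain ⟨e⟩ := CommGroup.monoidHom_mulEquiv_of_hasEnoughRootsOfUnity (Multiplicative A) ℂ
  have := Nat.card_congr (AddChar.toMonoidHomEquiv.trans e.toEquiv)
  simpa using this.trans (Nat.card_congr Multiplicative.toAdd)

/-- The annihilator of a subgroup `H` is in bijection with the characters of `G ⧸ H`. -/
noncomputable def annEquiv {G : Type*} [AddCommGroup G] (H : AddSubgroup G) :
    {χ : AddChar G ℂˣ // ∀ g ∈ H, χ g = 1} ≃ AddChar (G ⧸ H) ℂˣ where
  toFun χ := AddChar.toAddMonoidHomEquiv.symm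
    (QuotientAddGroup.lift H (AddChar.toAddMonoidHomEquiv χ.1)
      (fun g hg => by
        have : χ.1 g = 1 := χ.2 g hg
        simp [this]))
  invFun ψ := ⟨ψ.compAddMonoidHom (QuotientAddGroup.mk' H), fun g hg => by
    simp [(QuotientAddGroup.eq_zero_iff g).mpr hg]⟩
  left_inv χ := by
    ext g
    simp
  right_inv ψ := by
    ext x
    induction x using QuotientAddGroup.induction_on with
    | H g => simp

/-- For all `0 ≤ s ≤ r` one has `γ_{σ*}(s) = |G| / γ_σ(r − s)`: for every `S ∈ L`
(of dual rank `s = r - ρ(S)`), the cardinality of `Ĝ_{σ*}(S)` equals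
`|G| / γ_σ(ρ(S))`. -/
theorem stmt_5 {L : Type*} [Lattice L] [BoundedOrder L] [Fintype L]
    {G : Type*} [AddCommGroup G] [Fintype G] {RL : RegularLattice L}
    (RS : RegularSupport L G RL) (S : L) :
    (Nat.card {χ : AddChar G ℂˣ // S ≤ RS.dualSupp χ} : ℚ)
      = (Fintype.card G : ℚ) / (RS.γ (RL.ρ S) : ℚ) := by
  -- `H := G_σ(S)` is a subgroup of `G`
  set H : AddSubgroup G :=
    { carrier := {g | RS.σ g ≤ S}
      zero_mem' := by
        have : RS.σ (0 : G) = ⊥ := (RS.supp_zero 0).mpr rfl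
        simp [this]
      add_mem' := fun ha hb => le_trans (RS.supp_add _ _) (sup_le ha hb)
      neg_mem' := fun {g} hg => by simpa [RS.supp_neg g] using hg } with hHdef
  -- `S ≤ σ*(χ)` iff `χ` annihilates `H`
  have hchar : ∀ χ : AddChar G ℂˣ, S ≤ RS.dualSupp χ ↔ ∀ g ∈ H, χ g = 1 := by
    intro χ
    constructor
    · intro hS
      have key : ∀ g : G, RS.σ g ≤ (Finset.univ.filter
          (fun T : L => ∀ g : G, RS.σ g ≤ T → χ g = 1)).sup id → χ g = 1 := by
        refine Finset.sup_induction (p := fun T => ∀ g : G, RS.σ g ≤ T → χ g = 1) ?_ ?_ ?_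
        · intro g hg
          rw [le_bot_iff, RS.supp_zero] at hg
          simp [hg]
        · intro T₁ h₁ T₂ h₂ g hg
          have : g ∈ {g : G | RS.σ g ≤ T₁} + {g : G | RS.σ g ≤ T₂} := by
            rw [← RS.supp_sup]; exact hg
          obtain ⟨a, ha, b, hb, rfl⟩ := this
          rw [AddChar.map_add_eq_mul, h₁ a ha, h₂ b hb, one_mul]
        · intro T hT
          simpa using (Finset.mem_filter.mp hT).2
      exact fun g hg => key g (le_trans hg hS)
    · intro h
      exact Finset.le_sup (f := id) (Finset.mem_filter.mpr ⟨Finset.mem_univ S, h⟩)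
  have card1 : Nat.card {χ : AddChar G ℂˣ // S ≤ RS.dualSupp χ} = Nat.card (G ⧸ H) := by
    rw [Nat.card_congr ((Equiv.subtypeEquivRight hchar).trans (annEquiv H))]
    exact cardAddChar _
  have hH : Nat.card H = RS.γ (RL.ρ S) := RS.card_supp S
  have hmul : Nat.card G = Nat.card (G ⧸ H) * Nat.card H :=
    AddSubgroup.card_eq_card_quotient_mul_card_addSubgroup H
  have hγpos : 0 < RS.γ (RL.ρ S) := hH ▸ Nat.card_pos
  rw [card1]
  rw [eq_div_iff (by exact_mod_cast hγpos.ne')]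
  rw [← hH, ← Nat.card_eq_fintype_card]
  exact_mod_cast hmul.symm
end

section
/- Let σ : G ⇢ L be a regular support on a finite abelian group G with values in a regular lattice L, and let C ⊆ G be a non-zero code with minimum weight d = min{ω_σ(g) : g ∈ C, g ≠ 0}. Then |C| ≤ |G| / γ_σ(d − 1). -/
open Finset
open scoped Classical Pointwise

private lemma RegularLattice.rho_lt_of_lt {L : Type*} [Lattice L] [BoundedOrder L] [Fintype L]
    (RL : RegularLattice L) : ∀ T S : L, S < T → RL.ρ S < RL.ρ T := by
  haveI : LocallyFiniteOrder L := Fintype.toLocallyFiniteOrder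
  intro T
  induction T using WellFoundedLT.induction with
  | _ T IH =>
    intro S hST
    obtain ⟨U, hSU, hUT⟩ := exists_le_covBy_of_lt hST
    have hT := RL.ρ_covby U T hUT
    rcases eq_or_lt_of_le hSU with rfl | h
    · omega
    · have := IH U hUT.lt S h; omega

private lemma RegularLattice.rho_le_of_le {L : Type*} [Lattice L] [BoundedOrder L] [Fintype L]
    (RL : RegularLattice L) {S T : L} (h : S ≤ T) : RL.ρ S ≤ RL.ρ T := by
  rcases eq_or_lt_of_le h with rfl | h
  · exact le_rfl
  · exact (RL.rho_lt_of_lt T S h).le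

private lemma RegularLattice.exists_rho {L : Type*} [Lattice L] [BoundedOrder L] [Fintype L]
    (RL : RegularLattice L) : ∀ T : L, ∀ k, k ≤ RL.ρ T → ∃ S : L, S ≤ T ∧ RL.ρ S = k := by
  haveI : LocallyFiniteOrder L := Fintype.toLocallyFiniteOrder
  intro T
  induction T using WellFoundedLT.induction with
  | _ T IH =>
    intro k hk
    rcases eq_or_lt_of_le hk with rfl | hk'
    · exact ⟨T, le_rfl, rfl⟩
    · have hTne : T ≠ ⊥ := by
        rintro rfl; rw [RL.ρ_bot] at hk'; omega
      obtain ⟨U, -, hUT⟩ := exists_le_covBy_of_lt (bot_lt_iff_ne_bot.mpr hTne)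
      have hT := RL.ρ_covby U T hUT
      obtain ⟨S, hS, hρ⟩ := IH U hUT.lt k (by omega)
      exact ⟨S, hS.trans hUT.le, hρ⟩

/-- **Singleton-like bound.** If `C ⊆ G` is a non-zero code with minimum weight
`d = min {ω_σ(g) : g ∈ C, g ≠ 0}`, then `|C| ≤ |G| / γ_σ(d − 1)`.
Here `ω_σ(g) = ρ(σ(g))`. -/
theorem stmt_11 {L : Type*} [Lattice L] [BoundedOrder L] [Fintype L]
    {G : Type*} [AddCommGroup G] [Fintype G] {RL : RegularLattice L}
    (RS : RegularSupport L G RL) (C : AddSubgroup G) (hC : C ≠ ⊥)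
    (d : ℕ) (hd : IsLeast {n : ℕ | ∃ g ∈ C, g ≠ 0 ∧ RL.ρ (RS.σ g) = n} d) :
    (Nat.card C : ℚ) ≤ (Fintype.card G : ℚ) / (RS.γ (d - 1) : ℚ) := by
  obtain ⟨⟨g, hgC, hg0, hgd⟩, hmin⟩ := hd
  have hσ : RS.σ g ≠ ⊥ := fun h => hg0 ((RS.supp_zero g).mp h)
  have hdpos : 0 < d := by
    have := RL.rho_lt_of_lt (RS.σ g) ⊥ (bot_lt_iff_ne_bot.mpr hσ)
    rw [RL.ρ_bot] at this; omega
  obtain ⟨S, hSg, hρS⟩ := RL.exists_rho (RS.σ g) (d - 1) (by omega)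
  -- the subgroup H = G_σ(S)
  set H : AddSubgroup G :=
    { carrier := {x : G | RS.σ x ≤ S}
      zero_mem' := by
        simp only [Set.mem_setOf_eq, (RS.supp_zero 0).mpr rfl]
        exact bot_le
      add_mem' := fun {a b} ha hb =>
        le_trans (RS.supp_add a b) (sup_le ha hb)
      neg_mem' := fun {a} ha => by
        simpa only [Set.mem_setOf_eq, RS.supp_neg a] using ha } with hH
  have hcardH : Nat.card H = RS.γ (d - 1) := by
    rw [← hρS, ← RS.card_supp S]
    exact Nat.card_congr (Equiv.subtypeEquivRight (fun x => Iff.rfl))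
  have hHpos : 0 < Nat.card H := Nat.card_pos
  -- the addition map C × H → G is injective
  have hinj : Function.Injective (fun p : C × H => (p.1 : G) + (p.2 : G)) := by
    rintro ⟨⟨c, hc⟩, ⟨h, hh⟩⟩ ⟨⟨c', hc'⟩, ⟨h', hh'⟩⟩ hEq
    simp only at hEq
    have hcc' : c = c' := by
      by_contra hne
      have hmem : c - c' ∈ C := sub_mem hc hc'
      have hne0 : c - c' ≠ 0 := sub_ne_zero.mpr hne
      have hd_le : d ≤ RL.ρ (RS.σ (c - c')) := hmin ⟨c - c', hmem, hne0, rfl⟩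
      have hsub : c - c' = h' - h := by
        rw [sub_eq_sub_iff_add_eq_add, hEq, add_comm]
      have hσle : RS.σ (c - c') ≤ S := by
        rw [hsub]
        have h1 : RS.σ h' ≤ S := hh'
        have h2 : RS.σ (-h) ≤ S := by rwa [RS.supp_neg]
        calc RS.σ (h' - h) = RS.σ (h' + (-h)) := by rw [sub_eq_add_neg]
          _ ≤ RS.σ h' ⊔ RS.σ (-h) := RS.supp_add h' (-h)
          _ ≤ S := sup_le h1 h2
      have := RL.rho_le_of_le hσle
      rw [hρS] at this
      omega
    subst hcc'
    have : h = h' := by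
      have := hEq
      exact add_left_cancel this
    simp [this]
  have hcard : Nat.card C * Nat.card H ≤ Fintype.card G := by
    have := Nat.card_le_card_of_injective _ hinj
    rwa [Nat.card_prod, Nat.card_eq_fintype_card (α := G)] at this
  rw [le_div_iff₀ (by exact_mod_cast hHpos.trans_eq hcardH)]
  rw [← hcardH]
  exact_mod_cast hcard
end

section
/- Let σ : G ⇢ L be a regular support, r = rk(L), and let C ⊆ G be a code. For every integer 0 ≤ s ≤ r one has Σ_{S ∈ L : ρ(S) = s} |C_σ(S)| = Σ_{i=0}^{r} W_i(C, ω_σ) · μ_≥(s, i), where C_σ(S) = G_σ(S) ∩ C. -/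
open Finset
open scoped Classical Pointwise

/-- Rank is monotone on a finite lattice with the cover property. -/
lemma RegularLattice.rho_mono {L : Type*} [Lattice L] [BoundedOrder L] [Fintype L]
    (RL : RegularLattice L) : ∀ {S T : L}, S ≤ T → RL.ρ S ≤ RL.ρ T := by
  intro S T
  have wf : WellFoundedGT L := inferInstance
  induction S using wf.wf.induction with
  | _ S ih =>
    intro hST
    rcases eq_or_lt_of_le hST with rfl | hlt
    · exact le_rfl
    · obtain ⟨U, hSU, hUT⟩ := exists_covBy_le_of_lt hlt
      have h1 := RL.ρ_covby S U hSU
      have h2 := ih U hSU.lt hUT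
      omega

lemma RegularLattice.rho_le_r {L : Type*} [Lattice L] [BoundedOrder L] [Fintype L]
    (RL : RegularLattice L) (S : L) : RL.ρ S ≤ RL.r := by
  have := RL.rho_mono (le_top (a := S))
  rw [RL.ρ_top] at this
  exact this

/-- For every code `C ⊆ G` and every `0 ≤ s ≤ r`,
`Σ_{S ∈ L, ρ(S) = s} |C_σ(S)| = Σ_{i=0}^r W_i(C, ω_σ) μ_≥(s, i)`,
where `C_σ(S) = G_σ(S) ∩ C` and `W_i(C, ω_σ) = |{g ∈ C : ρ(σ(g)) = i}|`. -/
theorem stmt_13 {L : Type*} [Lattice L] [BoundedOrder L] [Fintype L]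
    {G : Type*} [AddCommGroup G] [Fintype G] {RL : RegularLattice L}
    (RS : RegularSupport L G RL) (C : AddSubgroup G) (s : ℕ) (hs : s ≤ RL.r) :
    ∑ S : L, (if RL.ρ S = s then Nat.card {g : G // g ∈ C ∧ RS.σ g ≤ S} else 0)
      = ∑ i ∈ Finset.range (RL.r + 1),
          Nat.card {g : G // g ∈ C ∧ RL.ρ (RS.σ g) = i} * RL.muGE s i := by
  classical
  -- rewrite both sides as double sums over g and S / i
  have hcard : ∀ S : L, Nat.card {g : G // g ∈ C ∧ RS.σ g ≤ S}
      = (Finset.univ.filter (fun g : G => g ∈ C ∧ RS.σ g ≤ S)).card := by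
    intro S
    rw [Nat.card_eq_fintype_card, Fintype.card_subtype]
  have hcard2 : ∀ i : ℕ, Nat.card {g : G // g ∈ C ∧ RL.ρ (RS.σ g) = i}
      = (Finset.univ.filter (fun g : G => g ∈ C ∧ RL.ρ (RS.σ g) = i)).card := by
    intro i
    rw [Nat.card_eq_fintype_card, Fintype.card_subtype]
  calc ∑ S : L, (if RL.ρ S = s then Nat.card {g : G // g ∈ C ∧ RS.σ g ≤ S} else 0)
      = ∑ S : L, ∑ g : G, (if g ∈ C ∧ (RL.ρ S = s ∧ RS.σ g ≤ S) then 1 else 0) := by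
        refine Finset.sum_congr rfl fun S _ => ?_
        by_cases h : RL.ρ S = s
        · simp only [h, if_true, hcard S, Finset.card_filter]
          exact Finset.sum_congr rfl fun g _ => by simp [h]
        · simp [h]
    _ = ∑ g : G, ∑ S : L, (if g ∈ C ∧ (RL.ρ S = s ∧ RS.σ g ≤ S) then 1 else 0) :=
        Finset.sum_comm
    _ = ∑ g : G, (if g ∈ C then RL.muGE s (RL.ρ (RS.σ g)) else 0) := by
        refine Finset.sum_congr rfl fun g _ => ?_
        by_cases hg : g ∈ C
        · simp only [hg, true_and, if_true]
          have := RL.card_ge s (RS.σ g)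
          rw [Nat.card_eq_fintype_card, Fintype.card_subtype] at this
          rw [← this, Finset.card_filter]
        · simp [hg]
    _ = ∑ g : G, ∑ i ∈ Finset.range (RL.r + 1),
          (if g ∈ C ∧ RL.ρ (RS.σ g) = i then RL.muGE s i else 0) := by
        refine Finset.sum_congr rfl fun g _ => ?_
        by_cases hg : g ∈ C
        · simp only [hg, true_and, if_true]
          rw [Finset.sum_ite_eq (Finset.range (RL.r + 1)) (RL.ρ (RS.σ g))
            (fun i => RL.muGE s i)]
          simp [Finset.mem_range, Nat.lt_succ_iff, RL.rho_le_r]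
        · simp [hg]
    _ = ∑ i ∈ Finset.range (RL.r + 1),
          Nat.card {g : G // g ∈ C ∧ RL.ρ (RS.σ g) = i} * RL.muGE s i := by
        rw [Finset.sum_comm]
        refine Finset.sum_congr rfl fun i _ => ?_
        rw [hcard2 i, Finset.card_filter, Finset.sum_mul]
        refine Finset.sum_congr rfl fun g _ => ?_
        by_cases h : g ∈ C ∧ RL.ρ (RS.σ g) = i <;> simp [h]
end

section
/- Let σ : G ⇢ L be a regular support, r = rk(L), and let C ⊆ G be a code. Then for every integer 0 ≤ s ≤ r, Σ_{i=0}^{s} W_i(C, ω_σ) · μ_≥(s, i) = (|C| / γ_{σ*}(r − s)) · Σ_{j=0}^{r−s} W_j(C*, ω_{σ*}) · μ_≤(s, r − j). -/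
open Finset
open scoped Classical Pointwise

namespace Stmt14Aux

section Lat
variable {L : Type*} [Lattice L] [BoundedOrder L] [Fintype L]

lemma rho_lt (RL : RegularLattice L) (S : L) : ∀ T : L, S < T → RL.ρ S < RL.ρ T := by
  have wf : WellFounded ((· > ·) : L → L → Prop) := wellFounded_gt
  refine wf.induction (C := fun S => ∀ T : L, S < T → RL.ρ S < RL.ρ T) S ?_
  intro S ih T hST
  obtain ⟨U, hSU, hUT⟩ := exists_covBy_le_of_lt hST
  have h1 : RL.ρ S < RL.ρ U := by rw [RL.ρ_covby S U hSU]; omega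
  rcases eq_or_lt_of_le hUT with rfl | hlt
  · exact h1
  · exact h1.trans (ih U hSU.lt T hlt)

lemma rho_le (RL : RegularLattice L) {S T : L} (h : S ≤ T) : RL.ρ S ≤ RL.ρ T := by
  rcases eq_or_lt_of_le h with rfl | h
  · exact le_rfl
  · exact (rho_lt RL S T h).le

lemma rho_le_r (RL : RegularLattice L) (U : L) : RL.ρ U ≤ RL.r := by
  have := rho_le RL (le_top (a := U))
  rwa [RL.ρ_top] at this

end Lat

section Char
variable {G : Type*} [AddCommGroup G] [Fintype G]

instance finiteAddChar : Finite (AddChar G ℂˣ) := by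
  haveI : NeZero (Monoid.exponent (Multiplicative G)) := Monoid.neZero_exponent_of_finite
  obtain ⟨e⟩ := CommGroup.monoidHom_mulEquiv_of_hasEnoughRootsOfUnity (Multiplicative G) ℂ
  exact Finite.of_equiv _ (e.toEquiv.symm.trans AddChar.toMonoidHomEquiv.symm)

lemma val_eq_one_iff (u : ℂˣ) : (u : ℂ) = 1 ↔ u = 1 := by
  constructor
  · intro h; exact Units.ext h
  · intro h; rw [h]; rfl

lemma sum_char_subgroup (K : AddSubgroup G) (χ : AddChar G ℂˣ) :
    ∑ g ∈ Finset.univ.filter (· ∈ K), ((χ g : ℂ)) =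
      if ∀ g ∈ K, χ g = 1 then ((Finset.univ.filter (· ∈ K)).card : ℂ) else 0 := by
  split_ifs with h
  · rw [Finset.sum_congr rfl (fun g hg => ?_), Finset.sum_const, nsmul_eq_mul, mul_one]
    rw [(val_eq_one_iff _).mpr (h g (by simpa using hg))]
  · push_neg at h
    obtain ⟨g₀, hg₀K, hg₀⟩ := h
    have key : ∑ g ∈ Finset.univ.filter (· ∈ K), ((χ g : ℂ)) =
        (χ g₀ : ℂ) * ∑ g ∈ Finset.univ.filter (· ∈ K), ((χ g : ℂ)) := by
      rw [Finset.mul_sum]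
      refine Finset.sum_equiv (Equiv.subRight g₀) ?_ ?_
      · intro g
        simp only [Finset.mem_filter, Finset.mem_univ, true_and, Equiv.subRight_apply]
        exact ⟨fun h => K.sub_mem h hg₀K, fun h => by simpa using K.add_mem h hg₀K⟩
      · intro g hg
        rw [Equiv.subRight_apply, ← Units.val_mul, ← AddChar.map_add_eq_mul]
        congr 1
        rw [add_comm, sub_add_cancel]
    have hne : (χ g₀ : ℂ) ≠ 1 := fun h' => hg₀ (Units.ext h')
    have h0 : ((χ g₀ : ℂ) - 1) * ∑ g ∈ Finset.univ.filter (· ∈ K), ((χ g : ℂ)) = 0 := by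
      linear_combination -key
    rcases mul_eq_zero.mp h0 with h' | h'
    · exact absurd (sub_eq_zero.mp h') hne
    · exact h'

lemma exists_char_ann (H : AddSubgroup G) {g : G} (hg : g ∉ H) :
    ∃ χ : AddChar G ℂˣ, (∀ h ∈ H, χ h = 1) ∧ χ g ≠ 1 := by
  haveI : NeZero (Monoid.exponent (Multiplicative (G ⧸ H))) := Monoid.neZero_exponent_of_finite
  have ha : (Multiplicative.ofAdd ((g : G ⧸ H))) ≠ 1 := by
    simp only [ne_eq, ofAdd_eq_one, QuotientAddGroup.eq_zero_iff]
    exact hg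
  obtain ⟨φ, hφ⟩ := CommGroup.exists_apply_ne_one_of_hasEnoughRootsOfUnity
    (Multiplicative (G ⧸ H)) ℂ ha
  refine ⟨AddChar.toMonoidHomEquiv.symm
    (φ.comp (AddMonoidHom.toMultiplicative (QuotientAddGroup.mk' H))), ?_, ?_⟩
  · intro h hh
    simp only [AddChar.toMonoidHomEquiv_symm_apply, MonoidHom.comp_apply]
    have : (QuotientAddGroup.mk' H) h = 0 := by
      simpa [QuotientAddGroup.eq_zero_iff] using hh
    simp [this]
  · simpa using hφ

lemma sum_char_ann [Fintype (AddChar G ℂˣ)] (H : AddSubgroup G) (g : G) :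
    ∑ χ ∈ Finset.univ.filter (fun χ : AddChar G ℂˣ => ∀ h ∈ H, χ h = 1), ((χ g : ℂ)) =
      if g ∈ H then
        ((Finset.univ.filter (fun χ : AddChar G ℂˣ => ∀ h ∈ H, χ h = 1)).card : ℂ) else 0 := by
  split_ifs with h
  · rw [Finset.sum_congr rfl (fun χ hχ => ?_), Finset.sum_const, nsmul_eq_mul, mul_one]
    have := (Finset.mem_filter.mp hχ).2 g h
    rw [(val_eq_one_iff _).mpr this]
  · obtain ⟨χ₀, hχ₀H, hχ₀⟩ := exists_char_ann H h
    have key : ∑ χ ∈ Finset.univ.filter (fun χ : AddChar G ℂˣ => ∀ h ∈ H, χ h = 1), ((χ g : ℂ)) =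
        (χ₀ g : ℂ) * ∑ χ ∈ Finset.univ.filter (fun χ : AddChar G ℂˣ => ∀ h ∈ H, χ h = 1),
          ((χ g : ℂ)) := by
      rw [Finset.mul_sum]
      refine Finset.sum_equiv (Equiv.mulLeft χ₀⁻¹) ?_ ?_
      · intro χ
        simp only [Finset.mem_filter, Finset.mem_univ, true_and, Equiv.coe_mulLeft]
        constructor
        · intro hχ h hh
          rw [AddChar.mul_apply, AddChar.inv_apply', hχ₀H h hh, hχ h hh, inv_one, mul_one]
        · intro hχ h hh
          have := hχ h hh
          rw [AddChar.mul_apply, AddChar.inv_apply', hχ₀H h hh, inv_one, one_mul] at this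
          exact this
      · intro χ hχ
        rw [Equiv.coe_mulLeft, AddChar.mul_apply, AddChar.inv_apply']
        push_cast
        field_simp
    have hne : (χ₀ g : ℂ) ≠ 1 := fun h' => hχ₀ (Units.ext h')
    have h0 : ((χ₀ g : ℂ) - 1) * ∑ χ ∈ Finset.univ.filter
        (fun χ : AddChar G ℂˣ => ∀ h ∈ H, χ h = 1), ((χ g : ℂ)) = 0 := by
      linear_combination -key
    rcases mul_eq_zero.mp h0 with h' | h'
    · exact absurd (sub_eq_zero.mp h') hne
    · exact h'

lemma nat_card_subtype {α : Type*} [Fintype α] (p : α → Prop) [DecidablePred p] :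
    Nat.card {x // p x} = (Finset.univ.filter p).card := by
  rw [Nat.card_eq_fintype_card, Fintype.card_subtype]

lemma master (C H : AddSubgroup G) :
    Nat.card {g : G // g ∈ C ∧ g ∈ H} * Nat.card {χ : AddChar G ℂˣ // ∀ h ∈ H, χ h = 1}
      = Nat.card C *
        Nat.card {χ : AddChar G ℂˣ // (∀ g ∈ C, χ g = 1) ∧ ∀ h ∈ H, χ h = 1} := by
  classical
  haveI : Fintype (AddChar G ℂˣ) := Fintype.ofFinite _
  set Cf : Finset G := Finset.univ.filter (· ∈ C) with hCf
  set Ann : Finset (AddChar G ℂˣ) := Finset.univ.filter (fun χ => ∀ h ∈ H, χ h = 1) with hAnn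
  have way1 : ∑ χ ∈ Ann, ∑ g ∈ Cf, ((χ g : ℂ)) =
      (Cf.card : ℂ) * ((Ann.filter (fun χ => ∀ g ∈ C, χ g = 1)).card : ℂ) := by
    rw [Finset.sum_congr rfl (fun χ _ => sum_char_subgroup C χ)]
    rw [Finset.sum_ite, Finset.sum_const, Finset.sum_const_zero, add_zero, nsmul_eq_mul,
      mul_comm]
  have way2 : ∑ χ ∈ Ann, ∑ g ∈ Cf, ((χ g : ℂ)) =
      ((Cf.filter (· ∈ H)).card : ℂ) * (Ann.card : ℂ) := by
    rw [Finset.sum_comm]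
    rw [Finset.sum_congr rfl (fun g _ => sum_char_ann H g)]
    rw [Finset.sum_ite, Finset.sum_const, Finset.sum_const_zero, add_zero, nsmul_eq_mul]
  have hnat : (Cf.filter (· ∈ H)).card * Ann.card =
      Cf.card * (Ann.filter (fun χ => ∀ g ∈ C, χ g = 1)).card := by
    have := way2.symm.trans way1
    exact_mod_cast this
  have e1 : Nat.card {g : G // g ∈ C ∧ g ∈ H} = (Cf.filter (· ∈ H)).card := by
    rw [nat_card_subtype, hCf, Finset.filter_filter]
  have e2 : Nat.card {χ : AddChar G ℂˣ // ∀ h ∈ H, χ h = 1} = Ann.card := by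
    rw [nat_card_subtype, hAnn]
  have e3 : Nat.card C = Cf.card := by
    have : Nat.card C = Nat.card {g : G // g ∈ C} := rfl
    rw [this, nat_card_subtype (· ∈ C), hCf]
  have e4 : Nat.card {χ : AddChar G ℂˣ // (∀ g ∈ C, χ g = 1) ∧ ∀ h ∈ H, χ h = 1}
      = (Ann.filter (fun χ => ∀ g ∈ C, χ g = 1)).card := by
    rw [nat_card_subtype, hAnn, Finset.filter_filter]
    have hpred : (fun χ : AddChar G ℂˣ => (∀ g ∈ C, χ g = 1) ∧ ∀ h ∈ H, χ h = 1)
        = (fun χ : AddChar G ℂˣ => (∀ h ∈ H, χ h = 1) ∧ ∀ g ∈ C, χ g = 1) := by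
      ext χ
      exact and_comm
    simp only [hpred]
  rw [e1, e2, e3, e4, hnat]

lemma ann_card_mul (H : AddSubgroup G) :
    Nat.card H * Nat.card {χ : AddChar G ℂˣ // ∀ h ∈ H, χ h = 1} = Nat.card G := by
  have := master (⊤ : AddSubgroup G) H
  have h1 : Nat.card {g : G // g ∈ (⊤ : AddSubgroup G) ∧ g ∈ H} = Nat.card H := by
    exact Nat.card_congr (Equiv.subtypeEquivRight (fun g => by simp))
  have h2 : Nat.card (⊤ : AddSubgroup G) = Nat.card G := by
    exact Nat.card_congr AddSubgroup.topEquiv.toEquiv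
  have h3 : Nat.card {χ : AddChar G ℂˣ //
      (∀ g ∈ (⊤ : AddSubgroup G), χ g = 1) ∧ ∀ h ∈ H, χ h = 1} = 1 := by
    rw [Nat.card_eq_one_iff_unique]
    constructor
    · constructor
      intro ⟨χ, hχ, _⟩ ⟨ψ, hψ, _⟩
      have : χ = ψ := by
        ext a
        rw [hχ a (by trivial), hψ a (by trivial)]
      exact Subtype.ext this
    · exact ⟨⟨1, fun g _ => rfl, fun h _ => rfl⟩⟩
  rw [h1, h2, h3, mul_one] at this
  exact this

end Char

section Supp
variable {L : Type*} [Lattice L] [BoundedOrder L] [Fintype L]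
  {G : Type*} [AddCommGroup G] [Fintype G] {RL : RegularLattice L}

def suppSubgroup (RS : RegularSupport L G RL) (T : L) : AddSubgroup G where
  carrier := {g | RS.σ g ≤ T}
  zero_mem' := by
    have h0 : RS.σ 0 = ⊥ := (RS.supp_zero 0).mpr rfl
    simp only [Set.mem_setOf_eq, h0]
    exact bot_le
  add_mem' := by
    intro a b ha hb
    exact le_trans (RS.supp_add a b) (sup_le ha hb)
  neg_mem' := by
    intro a ha
    simpa only [Set.mem_setOf_eq, RS.supp_neg] using ha

@[simp] lemma mem_suppSubgroup (RS : RegularSupport L G RL) (T : L) (g : G) :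
    g ∈ suppSubgroup RS T ↔ RS.σ g ≤ T := Iff.rfl

lemma chi_eq_one_of_le_dualSupp (RS : RegularSupport L G RL) (χ : AddChar G ℂˣ) :
    ∀ g : G, RS.σ g ≤ RS.dualSupp χ → χ g = 1 := by
  rw [RegularSupport.dualSupp]
  refine Finset.sup_induction (p := fun T : L => ∀ g : G, RS.σ g ≤ T → χ g = 1) ?_ ?_ ?_
  · intro g hg
    have : g = 0 := (RS.supp_zero g).mp (le_bot_iff.mp hg)
    rw [this, AddChar.map_zero_eq_one]
  · intro S₁ h₁ S₂ h₂ g hg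
    have hmem : g ∈ {g : G | RS.σ g ≤ S₁} + {g : G | RS.σ g ≤ S₂} := by
      rw [← RS.supp_sup S₁ S₂]
      exact hg
    obtain ⟨a, ha, b, hb, hab⟩ := Set.mem_add.mp hmem
    rw [← hab, AddChar.map_add_eq_mul, h₁ a ha, h₂ b hb, mul_one]
  · intro T hT
    simpa using (Finset.mem_filter.mp hT).2

lemma le_dualSupp_iff (RS : RegularSupport L G RL) (χ : AddChar G ℂˣ) (T : L) :
    T ≤ RS.dualSupp χ ↔ ∀ g : G, RS.σ g ≤ T → χ g = 1 := by
  constructor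
  · intro h g hg
    exact chi_eq_one_of_le_dualSupp RS χ g (hg.trans h)
  · intro h
    have : T ∈ Finset.univ.filter (fun S : L => ∀ g : G, RS.σ g ≤ S → χ g = 1) := by
      simp only [Finset.mem_filter, Finset.mem_univ, true_and]
      exact h
    exact Finset.le_sup (f := id) this

end Supp

lemma nat_card_eq_sum {α : Type*} [Fintype α] (p : α → Prop) [DecidablePred p] :
    Nat.card {x // p x} = ∑ x : α, if p x then 1 else 0 := by
  rw [nat_card_subtype, Finset.card_filter]

section Supp2
variable {L : Type*} [Lattice L] [BoundedOrder L] [Fintype L]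
  {G : Type*} [AddCommGroup G] [Fintype G] {RL : RegularLattice L}

lemma card_supp' (RS : RegularSupport L G RL) (T : L) :
    Nat.card (suppSubgroup RS T) = RS.γ (RL.ρ T) := by
  rw [← RS.card_supp T]
  exact Nat.card_congr (Equiv.subtypeEquivRight (fun g => Iff.rfl))

lemma gamma_pos (RS : RegularSupport L G RL) (T : L) : 0 < RS.γ (RL.ρ T) := by
  rw [← RS.card_supp T]
  haveI : Nonempty {g : G // RS.σ g ≤ T} :=
    ⟨⟨0, by rw [(RS.supp_zero 0).mpr rfl]; exact bot_le⟩⟩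
  exact Nat.card_pos

lemma ann_eq_dual_card (RS : RegularSupport L G RL) (T : L) :
    Nat.card {χ : AddChar G ℂˣ // ∀ h ∈ suppSubgroup RS T, χ h = 1}
      = Nat.card {χ : AddChar G ℂˣ // T ≤ RS.dualSupp χ} :=
  Nat.card_congr (Equiv.subtypeEquivRight (fun χ =>
    ⟨fun hh => (le_dualSupp_iff RS χ T).mpr hh, fun hh => (le_dualSupp_iff RS χ T).mp hh⟩))

lemma dual_card_mul (RS : RegularSupport L G RL) (T : L) :
    RS.γ (RL.ρ T) * Nat.card {χ : AddChar G ℂˣ // T ≤ RS.dualSupp χ} = Nat.card G := by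
  rw [← ann_eq_dual_card RS T, ← card_supp' RS T]
  exact ann_card_mul (suppSubgroup RS T)

lemma card_dual_eq (RS : RegularSupport L G RL) {T T' : L} (h : RL.ρ T = RL.ρ T') :
    Nat.card {χ : AddChar G ℂˣ // T ≤ RS.dualSupp χ}
      = Nat.card {χ : AddChar G ℂˣ // T' ≤ RS.dualSupp χ} := by
  have h1 := dual_card_mul RS T
  have h2 := dual_card_mul RS T'
  rw [h] at h1
  exact Nat.eq_of_mul_eq_mul_left (gamma_pos RS T') (h1.trans h2.symm)

end Supp2

end Stmt14Aux

/-- **Implicit MacWilliams identities.** For every code `C ⊆ G` and every `0 ≤ s ≤ r`,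
`Σ_{i=0}^s W_i(C, ω_σ) μ_≥(s,i) = (|C| / γ_{σ*}(r−s)) Σ_{j=0}^{r−s} W_j(C*, ω_{σ*}) μ_≤(s, r−j)`.
Here `γ_{σ*}(r−s) = |Ĝ_{σ*}(S)|` for any `S` with `ρ(S) = s`,
`ω_σ(g) = ρ(σ(g))` and `ω_{σ*}(χ) = r − ρ(σ*(χ))`. -/
theorem stmt_14 {L : Type*} [Lattice L] [BoundedOrder L] [Fintype L]
    {G : Type*} [AddCommGroup G] [Fintype G] {RL : RegularLattice L}
    (RS : RegularSupport L G RL) (C : AddSubgroup G)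
    (s : ℕ) (hs : s ≤ RL.r) (S : L) (hS : RL.ρ S = s) :
    ∑ i ∈ Finset.range (s + 1),
        (Nat.card {g : G // g ∈ C ∧ RL.ρ (RS.σ g) = i} : ℚ) * (RL.muGE s i : ℚ)
      = (Nat.card C : ℚ) / (Nat.card {χ : AddChar G ℂˣ // S ≤ RS.dualSupp χ} : ℚ)
          * ∑ j ∈ Finset.range (RL.r - s + 1),
              (Nat.card {χ : AddChar G ℂˣ //
                  (∀ g ∈ C, χ g = 1) ∧ RL.r - RL.ρ (RS.dualSupp χ) = j} : ℚ)
                * (RL.muLE s (RL.r - j) : ℚ) := by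
  classical
  classical
  open Stmt14Aux in
  haveI : Fintype (AddChar G ℂˣ) := Fintype.ofFinite _
  set D : ℕ := Nat.card {χ : AddChar G ℂˣ // S ≤ RS.dualSupp χ} with hD
  -- LHS in ℕ
  have hL : ∑ i ∈ Finset.range (s + 1),
      Nat.card {g : G // g ∈ C ∧ RL.ρ (RS.σ g) = i} * RL.muGE s i
      = ∑ T ∈ Finset.univ.filter (fun T : L => RL.ρ T = s),
          Nat.card {g : G // g ∈ C ∧ RS.σ g ≤ T} := by
    have hFi : ∀ i : ℕ,
        ∑ g ∈ (Finset.univ.filter (fun g : G => g ∈ C)).filter (fun g => RL.ρ (RS.σ g) = i),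
          RL.muGE s (RL.ρ (RS.σ g))
        = Nat.card {g : G // g ∈ C ∧ RL.ρ (RS.σ g) = i} * RL.muGE s i := by
      intro i
      calc ∑ g ∈ (Finset.univ.filter (fun g : G => g ∈ C)).filter
              (fun g => RL.ρ (RS.σ g) = i), RL.muGE s (RL.ρ (RS.σ g))
          = ∑ g ∈ (Finset.univ.filter (fun g : G => g ∈ C)).filter
              (fun g => RL.ρ (RS.σ g) = i), RL.muGE s i :=
            Finset.sum_congr rfl (fun g hg => by rw [(Finset.mem_filter.mp hg).2])
        _ = ((Finset.univ.filter (fun g : G => g ∈ C)).filter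
              (fun g => RL.ρ (RS.σ g) = i)).card * RL.muGE s i := by
            rw [Finset.sum_const, smul_eq_mul]
        _ = Nat.card {g : G // g ∈ C ∧ RL.ρ (RS.σ g) = i} * RL.muGE s i := by
            congr 1
            rw [Stmt14Aux.nat_card_eq_sum, Finset.card_filter, Finset.sum_filter]
            refine Finset.sum_congr rfl (fun g _ => ?_)
            by_cases h1 : g ∈ C <;> by_cases h2 : RL.ρ (RS.σ g) = i <;> simp [h1, h2]
    have hright : ∑ T ∈ Finset.univ.filter (fun T : L => RL.ρ T = s),
        Nat.card {g : G // g ∈ C ∧ RS.σ g ≤ T}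
        = ∑ g : G, if g ∈ C then RL.muGE s (RL.ρ (RS.σ g)) else 0 := by
      have t1 : ∑ T ∈ Finset.univ.filter (fun T : L => RL.ρ T = s),
          Nat.card {g : G // g ∈ C ∧ RS.σ g ≤ T}
          = ∑ T ∈ Finset.univ.filter (fun T : L => RL.ρ T = s),
              ∑ g : G, if g ∈ C ∧ RS.σ g ≤ T then 1 else 0 :=
        Finset.sum_congr rfl (fun T _ =>
          Stmt14Aux.nat_card_eq_sum (fun g : G => g ∈ C ∧ RS.σ g ≤ T))
      rw [t1, Finset.sum_comm]
      refine Finset.sum_congr rfl (fun g _ => ?_)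
      by_cases hgC : g ∈ C
      · simp only [hgC, true_and, if_true]
        rw [← RL.card_ge s (RS.σ g), Stmt14Aux.nat_card_eq_sum, Finset.sum_filter]
        refine Finset.sum_congr rfl (fun T _ => ?_)
        by_cases h1 : RL.ρ T = s <;> by_cases h2 : RS.σ g ≤ T <;> simp [h1, h2]
      · simp [hgC]
    calc ∑ i ∈ Finset.range (s + 1),
            Nat.card {g : G // g ∈ C ∧ RL.ρ (RS.σ g) = i} * RL.muGE s i
        = ∑ i ∈ Finset.range (RL.r + 1),
            Nat.card {g : G // g ∈ C ∧ RL.ρ (RS.σ g) = i} * RL.muGE s i := by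
          refine Finset.sum_subset (Finset.range_subset_range.mpr (by omega)) ?_
          intro i hi hni
          simp only [Finset.mem_range] at hni
          by_cases hne : Nonempty {g : G // g ∈ C ∧ RL.ρ (RS.σ g) = i}
          · obtain ⟨⟨g, hgC, hgi⟩⟩ := hne
            have hmu : RL.muGE s i = 0 := by
              rw [← hgi, ← RL.card_ge s (RS.σ g)]
              haveI : IsEmpty {S' : L // RL.ρ S' = s ∧ RS.σ g ≤ S'} :=
                ⟨fun ⟨S', h1, h2⟩ => by
                  have h3 := Stmt14Aux.rho_le RL h2
                  omega⟩
              exact Nat.card_of_isEmpty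
            rw [hmu, mul_zero]
          · haveI := not_nonempty_iff.mp hne
            rw [Nat.card_of_isEmpty, zero_mul]
      _ = ∑ i ∈ Finset.range (RL.r + 1),
            ∑ g ∈ (Finset.univ.filter (fun g : G => g ∈ C)).filter
              (fun g => RL.ρ (RS.σ g) = i), RL.muGE s (RL.ρ (RS.σ g)) :=
          Finset.sum_congr rfl (fun i _ => (hFi i).symm)
      _ = ∑ g ∈ Finset.univ.filter (fun g : G => g ∈ C), RL.muGE s (RL.ρ (RS.σ g)) :=
          Finset.sum_fiberwise_of_maps_to
            (fun g _ => Finset.mem_range.mpr (Nat.lt_succ_of_le (Stmt14Aux.rho_le_r RL _))) _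
      _ = ∑ g : G, if g ∈ C then RL.muGE s (RL.ρ (RS.σ g)) else 0 := Finset.sum_filter _ _
      _ = ∑ T ∈ Finset.univ.filter (fun T : L => RL.ρ T = s),
            Nat.card {g : G // g ∈ C ∧ RS.σ g ≤ T} := hright.symm
  -- RHS in ℕ
  have hR : ∑ j ∈ Finset.range (RL.r - s + 1),
      Nat.card {χ : AddChar G ℂˣ //
        (∀ g ∈ C, χ g = 1) ∧ RL.r - RL.ρ (RS.dualSupp χ) = j} * RL.muLE s (RL.r - j)
      = ∑ T ∈ Finset.univ.filter (fun T : L => RL.ρ T = s),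
          Nat.card {χ : AddChar G ℂˣ // (∀ g ∈ C, χ g = 1) ∧ T ≤ RS.dualSupp χ} := by
    have hFj : ∀ j : ℕ,
        ∑ χ ∈ (Finset.univ.filter (fun χ : AddChar G ℂˣ => ∀ g ∈ C, χ g = 1)).filter
            (fun χ => RL.r - RL.ρ (RS.dualSupp χ) = j),
          RL.muLE s (RL.ρ (RS.dualSupp χ))
        = Nat.card {χ : AddChar G ℂˣ //
            (∀ g ∈ C, χ g = 1) ∧ RL.r - RL.ρ (RS.dualSupp χ) = j} * RL.muLE s (RL.r - j) := by
      intro j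
      calc ∑ χ ∈ (Finset.univ.filter (fun χ : AddChar G ℂˣ => ∀ g ∈ C, χ g = 1)).filter
              (fun χ => RL.r - RL.ρ (RS.dualSupp χ) = j), RL.muLE s (RL.ρ (RS.dualSupp χ))
          = ∑ χ ∈ (Finset.univ.filter (fun χ : AddChar G ℂˣ => ∀ g ∈ C, χ g = 1)).filter
              (fun χ => RL.r - RL.ρ (RS.dualSupp χ) = j), RL.muLE s (RL.r - j) := by
            refine Finset.sum_congr rfl (fun χ hχ => ?_)
            have h1 := (Finset.mem_filter.mp hχ).2
            have h2 := Stmt14Aux.rho_le_r RL (RS.dualSupp χ)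
            congr 1
            omega
        _ = ((Finset.univ.filter (fun χ : AddChar G ℂˣ => ∀ g ∈ C, χ g = 1)).filter
              (fun χ => RL.r - RL.ρ (RS.dualSupp χ) = j)).card * RL.muLE s (RL.r - j) := by
            rw [Finset.sum_const, smul_eq_mul]
        _ = Nat.card {χ : AddChar G ℂˣ //
              (∀ g ∈ C, χ g = 1) ∧ RL.r - RL.ρ (RS.dualSupp χ) = j} * RL.muLE s (RL.r - j) := by
            congr 1
            rw [Stmt14Aux.nat_card_eq_sum, Finset.card_filter, Finset.sum_filter]
            refine Finset.sum_congr rfl (fun χ _ => ?_)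
            by_cases h1 : ∀ g ∈ C, χ g = 1 <;>
              by_cases h2 : RL.r - RL.ρ (RS.dualSupp χ) = j <;> simp [h1, h2]
    have hright : ∑ T ∈ Finset.univ.filter (fun T : L => RL.ρ T = s),
        Nat.card {χ : AddChar G ℂˣ // (∀ g ∈ C, χ g = 1) ∧ T ≤ RS.dualSupp χ}
        = ∑ χ : AddChar G ℂˣ,
            if ∀ g ∈ C, χ g = 1 then RL.muLE s (RL.ρ (RS.dualSupp χ)) else 0 := by
      have t1 : ∑ T ∈ Finset.univ.filter (fun T : L => RL.ρ T = s),
          Nat.card {χ : AddChar G ℂˣ // (∀ g ∈ C, χ g = 1) ∧ T ≤ RS.dualSupp χ}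
          = ∑ T ∈ Finset.univ.filter (fun T : L => RL.ρ T = s),
              ∑ χ : AddChar G ℂˣ, if (∀ g ∈ C, χ g = 1) ∧ T ≤ RS.dualSupp χ then 1 else 0 :=
        Finset.sum_congr rfl (fun T _ =>
          Stmt14Aux.nat_card_eq_sum (fun χ : AddChar G ℂˣ => (∀ g ∈ C, χ g = 1) ∧ T ≤ RS.dualSupp χ))
      rw [t1, Finset.sum_comm]
      refine Finset.sum_congr rfl (fun χ _ => ?_)
      by_cases hχ : ∀ g ∈ C, χ g = 1
      · have hiff : ∀ T : L, ((∀ g ∈ C, χ g = 1) ∧ T ≤ RS.dualSupp χ) ↔ T ≤ RS.dualSupp χ :=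
          fun T => ⟨fun h => h.2, fun h => ⟨hχ, h⟩⟩
        simp only [hiff, if_pos hχ]
        rw [← RL.card_le s (RS.dualSupp χ), Stmt14Aux.nat_card_eq_sum, Finset.sum_filter]
        refine Finset.sum_congr rfl (fun T _ => ?_)
        by_cases h1 : RL.ρ T = s <;> by_cases h2 : T ≤ RS.dualSupp χ <;> simp [h1, h2]
      · simp [hχ]
    calc ∑ j ∈ Finset.range (RL.r - s + 1),
            Nat.card {χ : AddChar G ℂˣ //
              (∀ g ∈ C, χ g = 1) ∧ RL.r - RL.ρ (RS.dualSupp χ) = j} * RL.muLE s (RL.r - j)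
        = ∑ j ∈ Finset.range (RL.r + 1),
            Nat.card {χ : AddChar G ℂˣ //
              (∀ g ∈ C, χ g = 1) ∧ RL.r - RL.ρ (RS.dualSupp χ) = j} * RL.muLE s (RL.r - j) := by
          refine Finset.sum_subset (Finset.range_subset_range.mpr (by omega)) ?_
          intro j hj hnj
          simp only [Finset.mem_range] at hj hnj
          by_cases hne : Nonempty {χ : AddChar G ℂˣ //
              (∀ g ∈ C, χ g = 1) ∧ RL.r - RL.ρ (RS.dualSupp χ) = j}
          · obtain ⟨⟨χ, hχC, hχj⟩⟩ := hne
            have hrj : RL.r - j = RL.ρ (RS.dualSupp χ) := by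
              have h2 := Stmt14Aux.rho_le_r RL (RS.dualSupp χ)
              omega
            have hmu : RL.muLE s (RL.r - j) = 0 := by
              rw [hrj, ← RL.card_le s (RS.dualSupp χ)]
              haveI : IsEmpty {S' : L // RL.ρ S' = s ∧ S' ≤ RS.dualSupp χ} :=
                ⟨fun ⟨S', h1, h2⟩ => by
                  have h3 := Stmt14Aux.rho_le RL h2
                  have h4 := Stmt14Aux.rho_le_r RL (RS.dualSupp χ)
                  omega⟩
              exact Nat.card_of_isEmpty
            rw [hmu, mul_zero]
          · haveI := not_nonempty_iff.mp hne
            rw [Nat.card_of_isEmpty, zero_mul]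
      _ = ∑ j ∈ Finset.range (RL.r + 1),
            ∑ χ ∈ (Finset.univ.filter (fun χ : AddChar G ℂˣ => ∀ g ∈ C, χ g = 1)).filter
              (fun χ => RL.r - RL.ρ (RS.dualSupp χ) = j), RL.muLE s (RL.ρ (RS.dualSupp χ)) :=
          Finset.sum_congr rfl (fun j _ => (hFj j).symm)
      _ = ∑ χ ∈ Finset.univ.filter (fun χ : AddChar G ℂˣ => ∀ g ∈ C, χ g = 1),
            RL.muLE s (RL.ρ (RS.dualSupp χ)) :=
          Finset.sum_fiberwise_of_maps_to
            (fun χ _ => Finset.mem_range.mpr (by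
              have := Stmt14Aux.rho_le_r RL (RS.dualSupp χ)
              omega)) _
      _ = ∑ χ : AddChar G ℂˣ,
            if ∀ g ∈ C, χ g = 1 then RL.muLE s (RL.ρ (RS.dualSupp χ)) else 0 :=
          Finset.sum_filter _ _
      _ = ∑ T ∈ Finset.univ.filter (fun T : L => RL.ρ T = s),
            Nat.card {χ : AddChar G ℂˣ // (∀ g ∈ C, χ g = 1) ∧ T ≤ RS.dualSupp χ} :=
          hright.symm
  -- per-T key identity
  have hkey : ∀ T : L, RL.ρ T = s →
      Nat.card {g : G // g ∈ C ∧ RS.σ g ≤ T} * D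
        = Nat.card C *
          Nat.card {χ : AddChar G ℂˣ // (∀ g ∈ C, χ g = 1) ∧ T ≤ RS.dualSupp χ} := by
    intro T hT
    have hm := Stmt14Aux.master C (Stmt14Aux.suppSubgroup RS T)
    have e1 : Nat.card {g : G // g ∈ C ∧ g ∈ Stmt14Aux.suppSubgroup RS T}
        = Nat.card {g : G // g ∈ C ∧ RS.σ g ≤ T} :=
      Nat.card_congr (Equiv.subtypeEquivRight (fun g => Iff.rfl))
    have e2 : Nat.card {χ : AddChar G ℂˣ // ∀ h ∈ Stmt14Aux.suppSubgroup RS T, χ h = 1} = D := by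
      rw [Stmt14Aux.ann_eq_dual_card RS T, hD]
      exact Stmt14Aux.card_dual_eq RS (by rw [hT, hS])
    have e3 : Nat.card {χ : AddChar G ℂˣ //
        (∀ g ∈ C, χ g = 1) ∧ ∀ h ∈ Stmt14Aux.suppSubgroup RS T, χ h = 1}
        = Nat.card {χ : AddChar G ℂˣ // (∀ g ∈ C, χ g = 1) ∧ T ≤ RS.dualSupp χ} :=
      Nat.card_congr (Equiv.subtypeEquivRight (fun χ => by
        constructor
        · rintro ⟨h1, h2⟩
          exact ⟨h1, (Stmt14Aux.le_dualSupp_iff RS χ T).mpr h2⟩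
        · rintro ⟨h1, h2⟩
          exact ⟨h1, (Stmt14Aux.le_dualSupp_iff RS χ T).mp h2⟩))
    rw [← e1, ← e3, ← e2]
    exact hm
  -- combine in ℕ
  have hAD : (∑ i ∈ Finset.range (s + 1),
      Nat.card {g : G // g ∈ C ∧ RL.ρ (RS.σ g) = i} * RL.muGE s i) * D
      = Nat.card C * ∑ j ∈ Finset.range (RL.r - s + 1),
          Nat.card {χ : AddChar G ℂˣ //
            (∀ g ∈ C, χ g = 1) ∧ RL.r - RL.ρ (RS.dualSupp χ) = j} * RL.muLE s (RL.r - j) := by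
    rw [hL, hR, Finset.sum_mul, Finset.mul_sum]
    refine Finset.sum_congr rfl (fun T hT => ?_)
    exact hkey T (Finset.mem_filter.mp hT).2
  have hD0 : D ≠ 0 := by
    haveI : Nonempty {χ : AddChar G ℂˣ // S ≤ RS.dualSupp χ} :=
      ⟨⟨1, (Stmt14Aux.le_dualSupp_iff RS 1 S).mpr (fun g _ => rfl)⟩⟩
    rw [hD]
    exact Nat.card_pos.ne'
  have hQ := congrArg (fun n : ℕ => (n : ℚ)) hAD
  push_cast at hQ
  have hD0Q : (D : ℚ) ≠ 0 := Nat.cast_ne_zero.mpr hD0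
  rw [div_mul_eq_mul_div, eq_div_iff hD0Q]
  linear_combination hQ
end

section
/- For every g ∈ 𝔽_q^n having exactly i nonzero entries (0 ≤ i ≤ n) and every 0 ≤ j ≤ n, the pair of Hamming weights (ω_H on G^n, ω_H on Ĝ^n) over a finite abelian group G is compatible with Krawtchouk coefficients K(i,j) = Σ_{s=0}^{n} (−1)^{j−s} |G|^{s} C(n−i, s) C(n−s, j−s). Consequently, for every code C ⊆ G^n (a subgroup of G^n) and every 0 ≤ j ≤ n: W_j(C*, ω_H) = (1/|C|) Σ_{i=0}^{n} W_i(C, ω_H) Σ_{s=0}^{n} (−1)^{j−s} |G|^{s} C(n−i, s) C(n−s, j−s), where W_j(C*, ω_H) counts characters in C* with exactly j nontrivial components. -/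
open Polynomial Finset
open scoped Classical


noncomputable def AddChar.unitsEquivComplex (G : Type*) [AddCommGroup G] :
    AddChar G ℂˣ ≃ AddChar G ℂ where
  toFun ψ := (Units.coeHom ℂ).compAddChar ψ
  invFun χ :=
    { toFun := fun a => (χ.val_isUnit a).unit
      map_zero_eq_one' := by ext; simp
      map_add_eq_mul' := fun a b => by ext; simp [AddChar.map_add_eq_mul] }
  left_inv ψ := by
    ext a
    exact (((Units.coeHom ℂ).compAddChar ψ).val_isUnit a).unit_spec
  right_inv χ := by ext a; exact (χ.val_isUnit a).unit_spec

lemma sum_units_apply {G : Type*} [AddCommGroup G] [Fintype G] [Fintype (AddChar G ℂˣ)] (a : G) :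
    ∑ ψ : AddChar G ℂˣ, ((ψ a : ℂˣ) : ℂ) = if a = 0 then (Fintype.card G : ℂ) else 0 := by
  classical
  rw [← AddChar.sum_apply_eq_ite a]
  exact Fintype.sum_equiv (AddChar.unitsEquivComplex G) _ _ fun ψ => rfl

lemma one_sub_pow_eq (m : ℕ) :
    (1 - X : ℂ[X]) ^ m = ∑ t ∈ range (m + 1), C ((-1) ^ t * (m.choose t : ℂ)) * X ^ t := by
  rw [sub_eq_add_neg, add_comm, add_pow]
  refine Finset.sum_congr rfl fun t ht => ?_
  rw [neg_pow]
  simp only [map_mul, map_pow, map_neg, map_one, map_natCast]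
  ring


lemma coeff_one_sub_pow (m k : ℕ) :
    ((1 - X : ℂ[X]) ^ m).coeff k = (-1) ^ k * (m.choose k : ℂ) := by
  rw [one_sub_pow_eq, finset_sum_coeff]
  simp only [coeff_C_mul, coeff_X_pow, mul_ite, mul_one, mul_zero]
  rw [Finset.sum_ite_eq (range (m + 1)) k]
  by_cases h : k ∈ range (m + 1)
  · simp [h]
  · simp only [h, if_false]
    rw [Nat.choose_eq_zero_of_lt (by simpa [Nat.lt_succ_iff, not_le] using h)]
    simp


lemma kraw_s16 {G : Type*} [AddCommGroup G] [Fintype G] [Fintype (AddChar G ℂˣ)] {n : ℕ}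
    (g : Fin n → G) (j : ℕ) (hj : j ≤ n) :
    ∑ χ : Fin n → AddChar G ℂˣ,
        (if (Finset.univ.filter fun i => χ i ≠ 1).card = j
          then (((∏ i, χ i (g i) : ℂˣ)) : ℂ) else 0)
      = ∑ s ∈ Finset.range (n + 1),
          (if s ≤ j then
            (-1 : ℂ) ^ (j - s) * (Fintype.card G : ℂ) ^ s
              * ((n - (Finset.univ.filter fun i => g i ≠ 0).card).choose s : ℂ)
              * ((n - s).choose (j - s) : ℂ)
          else 0) := by
  set q : ℂ := (Fintype.card G : ℂ) with hq
  set w : ℕ := (Finset.univ.filter fun i => g i ≠ 0).card with hwdef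
  have hwn : w ≤ n := by
    rw [hwdef]
    exact le_trans (Finset.card_filter_le _ _) (by simp)
  set P : ℂ[X] := ∑ χ : Fin n → AddChar G ℂˣ,
      C (((∏ i, χ i (g i) : ℂˣ)) : ℂ) * X ^ (Finset.univ.filter fun i => χ i ≠ 1).card with hPdef
  -- Step 1: product form
  have hP : P = ∏ i : Fin n, ∑ ψ : AddChar G ℂˣ,
      C ((ψ (g i) : ℂˣ) : ℂ) * X ^ (if ψ = 1 then 0 else 1) := by
    rw [Finset.prod_univ_sum, Fintype.piFinset_univ]
    refine Finset.sum_congr rfl fun χ _ => ?_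
    rw [Finset.prod_mul_distrib, Finset.prod_pow_eq_pow_sum]
    congr 1
    · rw [show ((∏ i, χ i (g i) : ℂˣ) : ℂ) = ∏ i, ((χ i (g i) : ℂˣ) : ℂ) from
        map_prod (Units.coeHom ℂ) _ _, map_prod]
    · rw [Finset.card_filter]
      congr 1
      refine Finset.sum_congr rfl fun i _ => ?_
      by_cases h : χ i = 1 <;> simp [h]
  -- Step 2: each factor
  have factor : ∀ a : G, (∑ ψ : AddChar G ℂˣ,
      C ((ψ a : ℂˣ) : ℂ) * X ^ (if ψ = 1 then 0 else 1))
      = if a = 0 then C q * X + (1 - X) else 1 - X := by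
    intro a
    have key : ∀ ψ : AddChar G ℂˣ, C ((ψ a : ℂˣ) : ℂ) * X ^ (if ψ = 1 then 0 else 1)
        = C ((ψ a : ℂˣ) : ℂ) * X + (if ψ = 1 then 1 - X else 0) := by
      intro ψ
      split_ifs with h
      · subst h
        simp only [AddChar.one_apply, Units.val_one, map_one, pow_zero, mul_one, one_mul]
        ring
      · simp [pow_one]
    rw [Finset.sum_congr rfl fun ψ _ => key ψ, Finset.sum_add_distrib,
      Finset.sum_ite_eq' Finset.univ (1 : AddChar G ℂˣ) (fun _ => (1 - X : ℂ[X]))]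
    simp only [Finset.mem_univ, if_true]
    rw [← Finset.sum_mul, ← map_sum, sum_units_apply]
    split_ifs with h
    · rw [map_natCast]
    · simp
  -- Step 3: product over coordinates
  have hcard0 : (Finset.univ.filter fun i : Fin n => g i = 0).card = n - w := by
    have h1 := Finset.card_filter_add_card_filter_not
      (s := (Finset.univ : Finset (Fin n))) (p := fun i => g i ≠ 0)
    have h2 : (Finset.univ.filter fun i : Fin n => g i = 0)
        = (Finset.univ.filter fun i : Fin n => ¬ g i ≠ 0) := by
      refine Finset.filter_congr fun i _ => by simp
    rw [h2]
    simp only [Finset.card_univ, Fintype.card_fin, ← hwdef] at h1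
    omega
  have hcard1 : (Finset.univ.filter fun i : Fin n => ¬ g i = 0).card = w := by
    rw [hwdef]
  have hP2 : P = (C q * X + (1 - X)) ^ (n - w) * (1 - X) ^ w := by
    rw [hP, Finset.prod_congr rfl fun i _ => factor (g i), Finset.prod_ite,
      Finset.prod_const, Finset.prod_const, hcard0, hcard1]
  -- Step 4: binomial expansion
  have hexpand : P = ∑ s ∈ Finset.range (n + 1),
      C (q ^ s * ((n - w).choose s : ℂ)) * ((1 - X) ^ (n - s) * X ^ s) := by
    rw [hP2, add_pow, Finset.sum_mul]
    have h1 : ∀ s ∈ Finset.range (n - w + 1),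
        (C q * X) ^ s * (1 - X) ^ (n - w - s) * ((n - w).choose s : ℂ[X]) * (1 - X) ^ w
        = C (q ^ s * ((n - w).choose s : ℂ)) * ((1 - X) ^ (n - s) * X ^ s) := by
      intro s hs
      rw [Finset.mem_range] at hs
      have hns : n - w - s + w = n - s := by omega
      rw [mul_pow, ← map_pow, ← hns, pow_add, ← map_natCast (C : ℂ →+* ℂ[X]) ((n - w).choose s),
        map_mul]
      ring
    rw [Finset.sum_congr rfl h1]
    refine Finset.sum_subset (Finset.range_subset_range.2 (by omega)) fun s hs hs' => ?_
    rw [Finset.mem_range] at hs hs'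
    rw [Nat.choose_eq_zero_of_lt (by omega)]
    simp
  -- Step 5: coefficients
  have hL : P.coeff j = ∑ χ : Fin n → AddChar G ℂˣ,
      (if (Finset.univ.filter fun i => χ i ≠ 1).card = j
        then (((∏ i, χ i (g i) : ℂˣ)) : ℂ) else 0) := by
    rw [hPdef, finset_sum_coeff]
    refine Finset.sum_congr rfl fun χ _ => ?_
    rw [coeff_C_mul, coeff_X_pow]
    by_cases h : (Finset.univ.filter fun i => χ i ≠ 1).card = j
    · rw [if_pos h, if_pos h.symm, mul_one]
    · rw [if_neg fun hc => h hc.symm, if_neg h, mul_zero]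
  have hR : P.coeff j = ∑ s ∈ Finset.range (n + 1),
      (if s ≤ j then
        (-1 : ℂ) ^ (j - s) * q ^ s * ((n - w).choose s : ℂ) * ((n - s).choose (j - s) : ℂ)
      else 0) := by
    rw [hexpand, finset_sum_coeff]
    refine Finset.sum_congr rfl fun s _ => ?_
    rw [coeff_C_mul, coeff_mul_X_pow', coeff_one_sub_pow]
    split_ifs with h
    · ring
    · simp
  rw [← hL, hR]

lemma dual_sum {G : Type*} [AddCommGroup G] [Fintype G] {n : ℕ}
    (C' : AddSubgroup (Fin n → G)) (χ : Fin n → AddChar G ℂˣ) :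
    ∑ g ∈ Finset.univ.filter (· ∈ C'), ((∏ i, χ i (g i) : ℂˣ) : ℂ)
      = if (∀ g ∈ C', (∏ i, χ i (g i)) = 1) then (Nat.card C' : ℂ) else 0 := by
  classical
  let ψ : AddChar ↥C' ℂ :=
    { toFun := fun x => ((∏ i, χ i (x.val i) : ℂˣ) : ℂ)
      map_zero_eq_one' := by
        simp [AddChar.map_zero_eq_one]
      map_add_eq_mul' := fun x y => by
        have h : (∏ i, χ i ((x + y).val i)) = (∏ i, χ i (x.val i)) * (∏ i, χ i (y.val i)) := by
          rw [← Finset.prod_mul_distrib]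
          exact Finset.prod_congr rfl fun i _ => by
            rw [AddSubgroup.coe_add, Pi.add_apply, AddChar.map_add_eq_mul]
        simp only [h, Units.val_mul] }
  have hsum : (∑ g ∈ Finset.univ.filter (· ∈ C'), ((∏ i, χ i (g i) : ℂˣ) : ℂ))
      = ∑ x : ↥C', ψ x := by
    rw [Finset.sum_subtype (p := (· ∈ C')) _ (fun x => by simp)]
    rfl
  rw [hsum, AddChar.sum_eq_ite ψ]
  have hiff : ψ = 0 ↔ (∀ g ∈ C', (∏ i, χ i (g i)) = 1) := by
    rw [DFunLike.ext_iff]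
    constructor
    · intro h g hg
      have := h ⟨g, hg⟩
      simp only [AddChar.zero_apply] at this
      exact Units.ext this
    · intro h x
      simp only [AddChar.zero_apply]
      exact congrArg Units.val (h x.val x.property)
  rw [Nat.card_eq_fintype_card]
  split_ifs with h1 h2 h2
  · rfl
  · exact absurd (hiff.1 h1) h2
  · exact absurd (hiff.2 h2) h1
  · rfl


/-- **MacWilliams identities for the Hamming weight over a finite abelian group.**
The character group of `G^n` is `Ĝ^n = Fin n → AddChar G ℂˣ`, acting by
`χ(g) = Π_i χ_i(g_i)`. The Hamming weight of `g ∈ G^n` is the number of nonzero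
entries; the Hamming weight of `χ ∈ Ĝ^n` is the number of nontrivial components.
First conjunct: for every `g` with exactly `i` nonzero entries and every `0 ≤ j ≤ n`,
`Σ_{χ : ω_H(χ) = j} χ(g) = Σ_{s=0}^n (−1)^{j−s} |G|^s C(n−i,s) C(n−s,j−s)`
(terms with `s > j` vanish, by the convention that binomial coefficients with
negative lower index are zero), so the pair `(ω_H, ω_H)` is compatible with these
Krawtchouk coefficients. Second conjunct: for every code `C ⊆ G^n` and `0 ≤ j ≤ n`,
`W_j(C*, ω_H) = (1/|C|) Σ_{i=0}^n W_i(C, ω_H) Σ_{s=0}^n (−1)^{j−s} |G|^s C(n−i,s) C(n−s,j−s)`. -/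
theorem stmt_16 {G : Type*} [AddCommGroup G] [Fintype G] [Fintype (AddChar G ℂˣ)]
    (n : ℕ) (hn : 1 ≤ n) :
    (∀ g : Fin n → G, ∀ j : ℕ, j ≤ n →
      ∑ χ : Fin n → AddChar G ℂˣ,
          (if (Finset.univ.filter fun i => χ i ≠ 1).card = j
            then (((∏ i, χ i (g i) : ℂˣ)) : ℂ) else 0)
        = ∑ s ∈ Finset.range (n + 1),
            (if s ≤ j then
              (-1 : ℂ) ^ (j - s) * (Fintype.card G : ℂ) ^ s
                * ((n - (Finset.univ.filter fun i => g i ≠ 0).card).choose s : ℂ)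
                * ((n - s).choose (j - s) : ℂ)
            else 0)) ∧
    (∀ C : AddSubgroup (Fin n → G), ∀ j : ℕ, j ≤ n →
      (Nat.card {χ : Fin n → AddChar G ℂˣ //
          (∀ g ∈ C, (∏ i, χ i (g i)) = 1)
            ∧ (Finset.univ.filter fun i => χ i ≠ 1).card = j} : ℂ)
        = (1 / (Nat.card C : ℂ))
            * ∑ i ∈ Finset.range (n + 1),
                (Nat.card {g : Fin n → G //
                    g ∈ C ∧ (Finset.univ.filter fun i' => g i' ≠ 0).card = i} : ℂ)
                  * ∑ s ∈ Finset.range (n + 1),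
                      (if s ≤ j then
                        (-1 : ℂ) ^ (j - s) * (Fintype.card G : ℂ) ^ s
                          * ((n - i).choose s : ℂ) * ((n - s).choose (j - s) : ℂ)
                      else 0)) := by
  classical
  refine ⟨fun g j hj => kraw_s16 g j hj, ?_⟩
  intro C' j hj
  set K : ℕ → ℂ := fun i => ∑ s ∈ Finset.range (n + 1),
      (if s ≤ j then (-1 : ℂ) ^ (j - s) * (Fintype.card G : ℂ) ^ s
        * ((n - i).choose s : ℂ) * ((n - s).choose (j - s) : ℂ) else 0) with hK
  set Cf : Finset (Fin n → G) := Finset.univ.filter (· ∈ C') with hCf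
  set T : ℂ := ∑ χ : Fin n → AddChar G ℂˣ,
      (if (Finset.univ.filter fun i => χ i ≠ 1).card = j
        then ∑ g ∈ Cf, ((∏ i, χ i (g i) : ℂˣ) : ℂ) else 0) with hT
  -- First way: T = N_dual * |C'|
  have hT1 : T = (Nat.card {χ : Fin n → AddChar G ℂˣ //
      (∀ g ∈ C', (∏ i, χ i (g i)) = 1)
        ∧ (Finset.univ.filter fun i => χ i ≠ 1).card = j} : ℂ) * (Nat.card C' : ℂ) := by
    have step : ∀ χ : Fin n → AddChar G ℂˣ,
        (if (Finset.univ.filter fun i => χ i ≠ 1).card = j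
          then ∑ g ∈ Cf, ((∏ i, χ i (g i) : ℂˣ) : ℂ) else 0)
        = if ((∀ g ∈ C', (∏ i, χ i (g i)) = 1)
            ∧ (Finset.univ.filter fun i => χ i ≠ 1).card = j)
          then (Nat.card C' : ℂ) else 0 := by
      intro χ
      rw [hCf, dual_sum C' χ]
      by_cases h1 : (Finset.univ.filter fun i => χ i ≠ 1).card = j
        <;> by_cases h2 : (∀ g ∈ C', (∏ i, χ i (g i)) = 1)
        <;> simp [h1, h2]
    rw [hT, Finset.sum_congr rfl fun χ _ => step χ, ← Finset.sum_filter,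
      Finset.sum_const, nsmul_eq_mul]
    congr 1
    rw [Nat.card_eq_fintype_card, Fintype.card_subtype]
  -- Second way: T = Σ_i W_i K(i)
  have hT2 : T = ∑ i ∈ Finset.range (n + 1),
      (Nat.card {g : Fin n → G //
          g ∈ C' ∧ (Finset.univ.filter fun i' => g i' ≠ 0).card = i} : ℂ) * K i := by
    have push : ∀ χ : Fin n → AddChar G ℂˣ,
        (if (Finset.univ.filter fun i => χ i ≠ 1).card = j
          then ∑ g ∈ Cf, ((∏ i, χ i (g i) : ℂˣ) : ℂ) else 0)
        = ∑ g ∈ Cf, (if (Finset.univ.filter fun i => χ i ≠ 1).card = j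
            then ((∏ i, χ i (g i) : ℂˣ) : ℂ) else 0) := by
      intro χ
      split_ifs with h
      · rfl
      · rw [Finset.sum_const_zero]
    rw [hT, Finset.sum_congr rfl fun χ _ => push χ, Finset.sum_comm,
      Finset.sum_congr rfl fun g _ => kraw_s16 g j hj]
    have wtle : ∀ g : Fin n → G, (Finset.univ.filter fun i' => g i' ≠ 0).card ≤ n := by
      intro g
      simpa using Finset.card_filter_le Finset.univ (fun i' => g i' ≠ 0)
    rw [← Finset.sum_fiberwise_of_maps_to
      (g := fun g : Fin n → G => (Finset.univ.filter fun i' => g i' ≠ 0).card)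
      (fun g _ => Finset.mem_range.2 (Nat.lt_succ_of_le (wtle g)))]
    refine Finset.sum_congr rfl fun i hi => ?_
    have inner : ∀ g ∈ Cf.filter
        (fun g : Fin n → G => (Finset.univ.filter fun i' => g i' ≠ 0).card = i),
        (∑ s ∈ Finset.range (n + 1),
          (if s ≤ j then (-1 : ℂ) ^ (j - s) * (Fintype.card G : ℂ) ^ s
            * ((n - (Finset.univ.filter fun i' => g i' ≠ 0).card).choose s : ℂ)
            * ((n - s).choose (j - s) : ℂ) else 0)) = K i := by
      intro g hg
      rw [hK]
      rw [(Finset.mem_filter.1 hg).2]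
    rw [Finset.sum_congr rfl inner, Finset.sum_const, nsmul_eq_mul]
    congr 2
    rw [Nat.card_eq_fintype_card, Fintype.card_subtype, hCf, Finset.filter_filter]
  have hc : (Nat.card C' : ℂ) ≠ 0 := by
    have : 0 < Nat.card C' := Nat.card_pos
    exact_mod_cast this.ne'
  rw [← hT2, hT1]
  field_simp
end
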